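/- arXiv:0807.3593 — 6 statements merged into one kernel-verified Lean document; each statement's English description precedes it below -/
import Mathlib

section
/- Let U, V, W₁, W₂, Y₁, Y₂ be random variables on a common probability space taking values in finite sets. If I(W₂;Y₁|(U,W₁)) = I(W₁;Y₂|(U,W₂)) and I(V;Y₂|(U,W₂)) = I(V;Y₂|W₂), then I((U,W₁,W₂);Y₁) + I(V;Y₂|(U,W₁,W₂)) = I(W₁;Y₁) + I(U;Y₁|W₁) + I(W₁;Y₂|(U,V,W₂)) + I(V;Y₂|W₂). -/
open MeasureTheory Real

/-- Shannon entropy (in nats) of a random variable taking values in a finite set. -/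
noncomputable def entropy {Ω : Type*} [MeasurableSpace Ω] (μ : Measure Ω)
    {S : Type*} [Fintype S] (X : Ω → S) : ℝ :=
  ∑ x : S, Real.negMulLog (μ (X ⁻¹' {x})).toReal

/-- Mutual information `I(X;Y) = H(X) + H(Y) - H(X,Y)`. -/
noncomputable def mutualInfo {Ω : Type*} [MeasurableSpace Ω] (μ : Measure Ω)
    {S T : Type*} [Fintype S] [Fintype T] (X : Ω → S) (Y : Ω → T) : ℝ :=
  entropy μ X + entropy μ Y - entropy μ (fun ω => (X ω, Y ω))

/-- Conditional mutual information `I(X;Y|Z) = H(X,Z) + H(Y,Z) - H(X,Y,Z) - H(Z)`. -/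
noncomputable def condMutualInfo {Ω : Type*} [MeasurableSpace Ω] (μ : Measure Ω)
    {S T R : Type*} [Fintype S] [Fintype T] [Fintype R]
    (X : Ω → S) (Y : Ω → T) (Z : Ω → R) : ℝ :=
  entropy μ (fun ω => (X ω, Z ω)) + entropy μ (fun ω => (Y ω, Z ω))
    - entropy μ (fun ω => (X ω, Y ω, Z ω)) - entropy μ Z

lemma entropy_comp_inj {Ω : Type*} [MeasurableSpace Ω] (μ : Measure Ω)
    {S T : Type*} [Fintype S] [Fintype T] (X : Ω → S) (f : S → T)
    (hf : Function.Injective f) :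
    entropy μ (fun ω => f (X ω)) = entropy μ X := by
  classical
  unfold entropy
  rw [← Finset.sum_subset (Finset.subset_univ (Finset.univ.image f))]
  · rw [Finset.sum_image (fun a _ b _ h => hf h)]
    refine Finset.sum_congr rfl fun x _ => ?_
    have : (fun ω => f (X ω)) ⁻¹' {f x} = X ⁻¹' {x} := by
      ext ω; simp [hf.eq_iff]
    rw [this]
  · intro t _ ht
    have : (fun ω => f (X ω)) ⁻¹' {t} = ∅ := by
      ext ω
      simp only [Set.mem_preimage, Set.mem_singleton_iff, Set.mem_empty_iff_false, iff_false]
      intro h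
      exact ht (Finset.mem_image.mpr ⟨X ω, Finset.mem_univ _, h⟩)
    simp [this]

theorem stmt_2
    {Ω : Type*} [MeasurableSpace Ω] (μ : Measure Ω) [IsProbabilityMeasure μ]
    {SU SV SW₁ SW₂ SY₁ SY₂ : Type*}
    [Fintype SU] [MeasurableSpace SU] [MeasurableSingletonClass SU] [Fintype SV] [MeasurableSpace SV] [MeasurableSingletonClass SV] [Fintype SW₁] [MeasurableSpace SW₁] [MeasurableSingletonClass SW₁] [Fintype SW₂] [MeasurableSpace SW₂] [MeasurableSingletonClass SW₂] [Fintype SY₁] [MeasurableSpace SY₁] [MeasurableSingletonClass SY₁] [Fintype SY₂] [MeasurableSpace SY₂] [MeasurableSingletonClass SY₂]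
    (U : Ω → SU) (V : Ω → SV) (W₁ : Ω → SW₁) (W₂ : Ω → SW₂) (Y₁ : Ω → SY₁) (Y₂ : Ω → SY₂)
    (hU : Measurable U) (hV : Measurable V) (hW₁ : Measurable W₁) (hW₂ : Measurable W₂) (hY₁ : Measurable Y₁) (hY₂ : Measurable Y₂)
    (h0 : condMutualInfo μ W₂ Y₁ (fun ω => (U ω, W₁ ω)) = condMutualInfo μ W₁ Y₂ (fun ω => (U ω, W₂ ω)))
    (h1 : condMutualInfo μ V Y₂ (fun ω => (U ω, W₂ ω)) = condMutualInfo μ V Y₂ W₂)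
    : mutualInfo μ (fun ω => (U ω, W₁ ω, W₂ ω)) Y₁ + condMutualInfo μ V Y₂ (fun ω => (U ω, W₁ ω, W₂ ω)) = mutualInfo μ W₁ Y₁ + condMutualInfo μ U Y₁ W₁ + condMutualInfo μ W₁ Y₂ (fun ω => (U ω, V ω, W₂ ω)) + condMutualInfo μ V Y₂ W₂ := by
  have e1 : entropy μ (fun ω => (W₂ ω, U ω, W₁ ω)) = entropy μ (fun ω => (U ω, W₁ ω, W₂ ω)) :=
    entropy_comp_inj μ (fun ω => (U ω, W₁ ω, W₂ ω)) (fun p => (p.2.2, p.1, p.2.1)) (Function.LeftInverse.injective (g := fun q => (q.2.1, q.2.2, q.1)) fun p => rfl)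
  have e2 : entropy μ (fun ω => (Y₁ ω, U ω, W₁ ω)) = entropy μ (fun ω => (U ω, W₁ ω, Y₁ ω)) :=
    entropy_comp_inj μ (fun ω => (U ω, W₁ ω, Y₁ ω)) (fun p => (p.2.2, p.1, p.2.1)) (Function.LeftInverse.injective (g := fun q => (q.2.1, q.2.2, q.1)) fun p => rfl)
  have e3 : entropy μ (fun ω => (W₂ ω, Y₁ ω, U ω, W₁ ω)) = entropy μ (fun ω => (U ω, W₁ ω, W₂ ω, Y₁ ω)) :=
    entropy_comp_inj μ (fun ω => (U ω, W₁ ω, W₂ ω, Y₁ ω)) (fun p => (p.2.2.1, p.2.2.2, p.1, p.2.1)) (Function.LeftInverse.injective (g := fun q => (q.2.2.1, q.2.2.2, q.1, q.2.1)) fun p => rfl)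
  have e4 : entropy μ (fun ω => (W₁ ω, U ω, W₂ ω)) = entropy μ (fun ω => (U ω, W₁ ω, W₂ ω)) :=
    entropy_comp_inj μ (fun ω => (U ω, W₁ ω, W₂ ω)) (fun p => (p.2.1, p.1, p.2.2)) (Function.LeftInverse.injective (g := fun q => (q.2.1, q.1, q.2.2)) fun p => rfl)
  have e5 : entropy μ (fun ω => (Y₂ ω, U ω, W₂ ω)) = entropy μ (fun ω => (U ω, W₂ ω, Y₂ ω)) :=
    entropy_comp_inj μ (fun ω => (U ω, W₂ ω, Y₂ ω)) (fun p => (p.2.2, p.1, p.2.1)) (Function.LeftInverse.injective (g := fun q => (q.2.1, q.2.2, q.1)) fun p => rfl)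
  have e6 : entropy μ (fun ω => (W₁ ω, Y₂ ω, U ω, W₂ ω)) = entropy μ (fun ω => (U ω, W₁ ω, W₂ ω, Y₂ ω)) :=
    entropy_comp_inj μ (fun ω => (U ω, W₁ ω, W₂ ω, Y₂ ω)) (fun p => (p.2.1, p.2.2.2, p.1, p.2.2.1)) (Function.LeftInverse.injective (g := fun q => (q.2.2.1, q.1, q.2.2.2, q.2.1)) fun p => rfl)
  have e7 : entropy μ (fun ω => (V ω, U ω, W₂ ω)) = entropy μ (fun ω => (U ω, V ω, W₂ ω)) :=
    entropy_comp_inj μ (fun ω => (U ω, V ω, W₂ ω)) (fun p => (p.2.1, p.1, p.2.2)) (Function.LeftInverse.injective (g := fun q => (q.2.1, q.1, q.2.2)) fun p => rfl)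
  have e8 : entropy μ (fun ω => (V ω, Y₂ ω, U ω, W₂ ω)) = entropy μ (fun ω => (U ω, V ω, W₂ ω, Y₂ ω)) :=
    entropy_comp_inj μ (fun ω => (U ω, V ω, W₂ ω, Y₂ ω)) (fun p => (p.2.1, p.2.2.2, p.1, p.2.2.1)) (Function.LeftInverse.injective (g := fun q => (q.2.2.1, q.1, q.2.2.2, q.2.1)) fun p => rfl)
  have e9 : entropy μ (fun ω => (V ω, Y₂ ω, W₂ ω)) = entropy μ (fun ω => (V ω, W₂ ω, Y₂ ω)) :=
    entropy_comp_inj μ (fun ω => (V ω, W₂ ω, Y₂ ω)) (fun p => (p.1, p.2.2, p.2.1)) (Function.LeftInverse.injective (g := fun q => (q.1, q.2.2, q.2.1)) fun p => rfl)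
  have e9b : entropy μ (fun ω => (Y₂ ω, W₂ ω)) = entropy μ (fun ω => (W₂ ω, Y₂ ω)) :=
    entropy_comp_inj μ (fun ω => (W₂ ω, Y₂ ω)) (fun p => (p.2, p.1)) (Function.LeftInverse.injective (g := fun q => (q.2, q.1)) fun p => rfl)
  have e10 : entropy μ (fun ω => ((U ω, W₁ ω, W₂ ω), Y₁ ω)) = entropy μ (fun ω => (U ω, W₁ ω, W₂ ω, Y₁ ω)) :=
    entropy_comp_inj μ (fun ω => (U ω, W₁ ω, W₂ ω, Y₁ ω)) (fun p => ((p.1, p.2.1, p.2.2.1), p.2.2.2)) (Function.LeftInverse.injective (g := fun q => (q.1.1, q.1.2.1, q.1.2.2, q.2)) fun p => rfl)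
  have e11 : entropy μ (fun ω => (V ω, U ω, W₁ ω, W₂ ω)) = entropy μ (fun ω => (U ω, V ω, W₁ ω, W₂ ω)) :=
    entropy_comp_inj μ (fun ω => (U ω, V ω, W₁ ω, W₂ ω)) (fun p => (p.2.1, p.1, p.2.2)) (Function.LeftInverse.injective (g := fun q => (q.2.1, q.1, q.2.2)) fun p => rfl)
  have e12 : entropy μ (fun ω => (Y₂ ω, U ω, W₁ ω, W₂ ω)) = entropy μ (fun ω => (U ω, W₁ ω, W₂ ω, Y₂ ω)) :=
    entropy_comp_inj μ (fun ω => (U ω, W₁ ω, W₂ ω, Y₂ ω)) (fun p => (p.2.2.2, p.1, p.2.1, p.2.2.1)) (Function.LeftInverse.injective (g := fun q => (q.2.1, q.2.2.1, q.2.2.2, q.1)) fun p => rfl)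
  have e13 : entropy μ (fun ω => (V ω, Y₂ ω, U ω, W₁ ω, W₂ ω)) = entropy μ (fun ω => (U ω, V ω, W₁ ω, W₂ ω, Y₂ ω)) :=
    entropy_comp_inj μ (fun ω => (U ω, V ω, W₁ ω, W₂ ω, Y₂ ω)) (fun p => (p.2.1, p.2.2.2.2, p.1, p.2.2.1, p.2.2.2.1)) (Function.LeftInverse.injective (g := fun q => (q.2.2.1, q.1, q.2.2.2.1, q.2.2.2.2, q.2.1)) fun p => rfl)
  have e14 : entropy μ (fun ω => (Y₁ ω, W₁ ω)) = entropy μ (fun ω => (W₁ ω, Y₁ ω)) :=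
    entropy_comp_inj μ (fun ω => (W₁ ω, Y₁ ω)) (fun p => (p.2, p.1)) (Function.LeftInverse.injective (g := fun q => (q.2, q.1)) fun p => rfl)
  have e15 : entropy μ (fun ω => (U ω, Y₁ ω, W₁ ω)) = entropy μ (fun ω => (U ω, W₁ ω, Y₁ ω)) :=
    entropy_comp_inj μ (fun ω => (U ω, W₁ ω, Y₁ ω)) (fun p => (p.1, p.2.2, p.2.1)) (Function.LeftInverse.injective (g := fun q => (q.1, q.2.2, q.2.1)) fun p => rfl)
  have e16 : entropy μ (fun ω => (W₁ ω, U ω, V ω, W₂ ω)) = entropy μ (fun ω => (U ω, V ω, W₁ ω, W₂ ω)) :=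
    entropy_comp_inj μ (fun ω => (U ω, V ω, W₁ ω, W₂ ω)) (fun p => (p.2.2.1, p.1, p.2.1, p.2.2.2)) (Function.LeftInverse.injective (g := fun q => (q.2.1, q.2.2.1, q.1, q.2.2.2)) fun p => rfl)
  have e17 : entropy μ (fun ω => (Y₂ ω, U ω, V ω, W₂ ω)) = entropy μ (fun ω => (U ω, V ω, W₂ ω, Y₂ ω)) :=
    entropy_comp_inj μ (fun ω => (U ω, V ω, W₂ ω, Y₂ ω)) (fun p => (p.2.2.2, p.1, p.2.1, p.2.2.1)) (Function.LeftInverse.injective (g := fun q => (q.2.1, q.2.2.1, q.2.2.2, q.1)) fun p => rfl)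
  have e18 : entropy μ (fun ω => (W₁ ω, Y₂ ω, U ω, V ω, W₂ ω)) = entropy μ (fun ω => (U ω, V ω, W₁ ω, W₂ ω, Y₂ ω)) :=
    entropy_comp_inj μ (fun ω => (U ω, V ω, W₁ ω, W₂ ω, Y₂ ω)) (fun p => (p.2.2.1, p.2.2.2.2, p.1, p.2.1, p.2.2.2.1)) (Function.LeftInverse.injective (g := fun q => (q.2.2.1, q.2.2.2.1, q.1, q.2.2.2.2, q.2.1)) fun p => rfl)
  simp only [mutualInfo, condMutualInfo] at h0 h1 ⊢
  linarith [e1, e2, e3, e4, e5, e6, e7, e8, e9, e9b, e10, e11, e12, e13, e14, e15, e16, e17, e18, h0, h1]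
end

section
/- Let U, V, W₁, W₂, Y₁, Y₂ be random variables on a common probability space taking values in finite sets. If I(W₂;Y₁|(U,W₁)) = I(W₁;Y₂|(U,W₂)) and I(V;Y₂|(U,W₂)) = I(V;Y₂|W₂), then I(U;Y₁|W₁) + I(V;Y₂|W₂) ≤ I((W₁,W₂);Y₁) + I(U;Y₁|(W₁,W₂)) + I(V;Y₂|(U,W₁,W₂)). -/
open MeasureTheory Real

section Helpers
open Finset

private lemma sum_rot' {A B C M : Type*} [Fintype A] [Fintype B] [Fintype C] [AddCommMonoid M]
    (f : A → B → C → M) :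
    ∑ a, ∑ b, ∑ c, f a b c = ∑ c, ∑ a, ∑ b, f a b c :=
  calc ∑ a, ∑ b, ∑ c, f a b c = ∑ a, ∑ c, ∑ b, f a b c :=
        Finset.sum_congr rfl fun _ _ => Finset.sum_comm
    _ = ∑ c, ∑ a, ∑ b, f a b c := Finset.sum_comm

private lemma submodular_aux' {A B C : Type*} [Fintype A] [Fintype B] [Fintype C]
    (p : A → B → C → ℝ) (hp : ∀ a b c, 0 ≤ p a b c)
    (hsum : ∑ a, ∑ b, ∑ c, p a b c = 1) :
    (∑ c, negMulLog (∑ a, ∑ b, p a b c)) + ∑ a, ∑ b, ∑ c, negMulLog (p a b c)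
      ≤ (∑ a, ∑ c, negMulLog (∑ b, p a b c)) + ∑ b, ∑ c, negMulLog (∑ a, p a b c) := by
  set pac : A → C → ℝ := fun a c => ∑ b, p a b c with hpac
  set pbc : B → C → ℝ := fun b c => ∑ a, p a b c with hpbc
  set pc : C → ℝ := fun c => ∑ a, ∑ b, p a b c with hpc
  have hpac0 : ∀ a c, 0 ≤ pac a c := fun a c => Finset.sum_nonneg fun b _ => hp a b c
  have hpbc0 : ∀ b c, 0 ≤ pbc b c := fun b c => Finset.sum_nonneg fun a _ => hp a b c
  have hpc0 : ∀ c, 0 ≤ pc c := fun c => Finset.sum_nonneg fun a _ => hpac0 a c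
  have key : ∀ a b c, p a b c * log (pac a c) + p a b c * log (pbc b c)
      - p a b c * log (p a b c) - p a b c * log (pc c)
      ≤ pac a c * pbc b c / pc c - p a b c := by
    intro a b c
    rcases eq_or_lt_of_le (hp a b c) with h | h
    · rw [← h]
      simp
      exact div_nonneg (mul_nonneg (hpac0 a c) (hpbc0 b c)) (hpc0 c)
    · have h1 : 0 < pac a c := lt_of_lt_of_le h (Finset.single_le_sum (fun b _ => hp a b c) (mem_univ b))
      have h2 : 0 < pbc b c := lt_of_lt_of_le h (Finset.single_le_sum (fun a _ => hp a b c) (mem_univ a))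
      have h3 : 0 < pc c := lt_of_lt_of_le h1 (Finset.single_le_sum (fun a _ => hpac0 a c) (mem_univ a))
      have ht : 0 < pac a c * pbc b c / (p a b c * pc c) := by positivity
      have hlog : log (pac a c * pbc b c / (p a b c * pc c))
          = log (pac a c) + log (pbc b c) - log (p a b c) - log (pc c) := by
        rw [Real.log_div (by positivity) (by positivity), Real.log_mul h1.ne' h2.ne',
          Real.log_mul h.ne' h3.ne']
        ring
      have hmul := mul_le_mul_of_nonneg_left (Real.log_le_sub_one_of_pos ht) h.le
      rw [hlog] at hmul
      calc p a b c * log (pac a c) + p a b c * log (pbc b c)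
            - p a b c * log (p a b c) - p a b c * log (pc c)
          = p a b c * (log (pac a c) + log (pbc b c) - log (p a b c) - log (pc c)) := by ring
        _ ≤ p a b c * (pac a c * pbc b c / (p a b c * pc c) - 1) := hmul
        _ = pac a c * pbc b c / pc c - p a b c := by field_simp
  have hmargA : ∀ c, ∑ a, pac a c = pc c := fun c => rfl
  have hmargB : ∀ c, ∑ b, pbc b c = pc c := fun c => Finset.sum_comm
  have hpcsum : ∑ c, pc c = 1 := by rw [← hsum]; exact (sum_rot' p).symm
  have e1 : ∑ a, ∑ b, ∑ c, (pac a c * pbc b c / pc c) = 1 := by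
    have hc : ∀ c, ∑ a, ∑ b, (pac a c * pbc b c / pc c) = pc c := by
      intro c
      rcases eq_or_lt_of_le (hpc0 c) with h | h
      · have hz : ∀ a, pac a c = 0 := by
          intro a
          refine le_antisymm ?_ (hpac0 a c)
          rw [show (0:ℝ) = pc c from h]
          exact (hmargA c) ▸ Finset.single_le_sum (fun a _ => hpac0 a c) (mem_univ a)
        simp [hz, ← h]
      · have hb : ∀ a, ∑ b, (pac a c * pbc b c / pc c) = pac a c * pc c / pc c := by
          intro a
          rw [← Finset.sum_div, ← Finset.mul_sum, hmargB]
        rw [Finset.sum_congr rfl fun a _ => hb a, ← Finset.sum_div, ← Finset.sum_mul, hmargA]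
        field_simp
    calc ∑ a, ∑ b, ∑ c, (pac a c * pbc b c / pc c)
        = ∑ c, ∑ a, ∑ b, (pac a c * pbc b c / pc c) := sum_rot' _
      _ = ∑ c, pc c := Finset.sum_congr rfl fun c _ => hc c
      _ = 1 := hpcsum
  have hkey_sum : ∑ a, ∑ b, ∑ c, (p a b c * log (pac a c) + p a b c * log (pbc b c)
      - p a b c * log (p a b c) - p a b c * log (pc c)) ≤ 0 := by
    calc ∑ a, ∑ b, ∑ c, (p a b c * log (pac a c) + p a b c * log (pbc b c)
          - p a b c * log (p a b c) - p a b c * log (pc c))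
        ≤ ∑ a, ∑ b, ∑ c, (pac a c * pbc b c / pc c - p a b c) :=
          Finset.sum_le_sum fun a _ => Finset.sum_le_sum fun b _ => Finset.sum_le_sum fun c _ => key a b c
      _ = 0 := by
          simp only [Finset.sum_sub_distrib]
          rw [e1, hsum]
          ring
  have r1 : ∑ a, ∑ c, negMulLog (pac a c) = ∑ a, ∑ b, ∑ c, -(p a b c * log (pac a c)) := by
    refine Finset.sum_congr rfl fun a _ => ?_
    rw [Finset.sum_comm]
    refine Finset.sum_congr rfl fun c _ => ?_
    rw [negMulLog, hpac]
    simp only [neg_mul, Finset.sum_mul, Finset.sum_neg_distrib]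
  have r2 : ∑ b, ∑ c, negMulLog (pbc b c) = ∑ a, ∑ b, ∑ c, -(p a b c * log (pbc b c)) := by
    rw [show ∑ a, ∑ b, ∑ c, -(p a b c * log (pbc b c))
        = ∑ b, ∑ c, ∑ a, -(p a b c * log (pbc b c)) by
      rw [Finset.sum_comm]
      exact Finset.sum_congr rfl fun b _ => Finset.sum_comm]
    refine Finset.sum_congr rfl fun b _ => Finset.sum_congr rfl fun c _ => ?_
    rw [negMulLog, hpbc]
    simp only [neg_mul, Finset.sum_mul, Finset.sum_neg_distrib]
  have r3 : ∑ c, negMulLog (pc c) = ∑ a, ∑ b, ∑ c, -(p a b c * log (pc c)) := by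
    rw [sum_rot' (fun a b c => -(p a b c * log (pc c)))]
    refine Finset.sum_congr rfl fun c _ => ?_
    rw [negMulLog, hpc]
    simp only [neg_mul, Finset.sum_mul, Finset.sum_neg_distrib]
  have r4 : ∑ a, ∑ b, ∑ c, negMulLog (p a b c)
      = ∑ a, ∑ b, ∑ c, -(p a b c * log (p a b c)) := by
    simp [negMulLog, neg_mul]
  rw [r1, r2, r3, r4]
  have comb : (∑ a, ∑ b, ∑ c, -(p a b c * log (pac a c)))
        + (∑ a, ∑ b, ∑ c, -(p a b c * log (pbc b c)))
        - ((∑ a, ∑ b, ∑ c, -(p a b c * log (pc c)))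
        + (∑ a, ∑ b, ∑ c, -(p a b c * log (p a b c))))
      = -(∑ a, ∑ b, ∑ c, (p a b c * log (pac a c) + p a b c * log (pbc b c)
          - p a b c * log (p a b c) - p a b c * log (pc c))) := by
    simp only [← Finset.sum_neg_distrib, ← Finset.sum_add_distrib, ← Finset.sum_sub_distrib]
    exact Finset.sum_congr rfl fun a _ => Finset.sum_congr rfl fun b _ =>
      Finset.sum_congr rfl fun c _ => by ring
  linarith [hkey_sum, comb]

variable {Ω : Type*} [MeasurableSpace Ω] (μ : Measure Ω)

private lemma entropy_eq' {S T : Type*} [Fintype S] [Fintype T] (e : S ≃ T)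
    (X : Ω → S) (Y : Ω → T) (h : ∀ ω, Y ω = e (X ω)) :
    entropy μ Y = entropy μ X := by
  unfold entropy
  rw [← Equiv.sum_comp e (fun t => Real.negMulLog (μ (Y ⁻¹' {t})).toReal)]
  refine Finset.sum_congr rfl fun s _ => ?_
  have : Y ⁻¹' {e s} = X ⁻¹' {s} := by
    ext ω; simp [h ω, e.injective.eq_iff]
  rw [this]

variable [IsProbabilityMeasure μ]
variable {S T R : Type*} [Fintype S] [MeasurableSpace S] [MeasurableSingletonClass S]
  [Fintype T] [MeasurableSpace T] [MeasurableSingletonClass T]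
  [Fintype R] [MeasurableSpace R] [MeasurableSingletonClass R]

private lemma condMutualInfo_nonneg' (X : Ω → S) (Y : Ω → T) (Z : Ω → R)
    (hX : Measurable X) (hY : Measurable Y) (hZ : Measurable Z) :
    0 ≤ condMutualInfo μ X Y Z := by
  set p : S → T → R → ℝ :=
    fun a b c => (μ ((fun ω => (X ω, Y ω, Z ω)) ⁻¹' {(a, b, c)})).toReal with hpdef
  have hset : ∀ a b c, (fun ω => (X ω, Y ω, Z ω)) ⁻¹' {(a, b, c)}
      = X ⁻¹' {a} ∩ (Y ⁻¹' {b} ∩ Z ⁻¹' {c}) := by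
    intro a b c; ext ω; simp [Prod.ext_iff]
  have hmeas : ∀ a b c, MeasurableSet ((fun ω => (X ω, Y ω, Z ω)) ⁻¹' {(a, b, c)}) := by
    intro a b c; rw [hset]
    exact (hX (measurableSet_singleton a)).inter
      ((hY (measurableSet_singleton b)).inter (hZ (measurableSet_singleton c)))
  have hp : ∀ a b c, 0 ≤ p a b c := fun _ _ _ => ENNReal.toReal_nonneg
  have hXZ : ∀ a c, (μ ((fun ω => (X ω, Z ω)) ⁻¹' {(a, c)})).toReal = ∑ b, p a b c := by
    intro a c
    have hun : (fun ω => (X ω, Z ω)) ⁻¹' {(a, c)}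
        = ⋃ b, (fun ω => (X ω, Y ω, Z ω)) ⁻¹' {(a, b, c)} := by
      ext ω; simp [Prod.ext_iff]
    have hdis : Pairwise (Function.onFun Disjoint fun b => (fun ω => (X ω, Y ω, Z ω)) ⁻¹' {(a, b, c)}) := by
      intro b b' hbb
      rw [Function.onFun, Set.disjoint_left]
      intro ω hω hω'
      simp only [Set.mem_preimage, Set.mem_singleton_iff, Prod.ext_iff] at hω hω'
      exact hbb (hω.2.1.symm.trans hω'.2.1)
    rw [hun, measure_iUnion hdis (fun b => hmeas a b c), tsum_fintype]
    exact ENNReal.toReal_sum fun b _ => measure_ne_top μ _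
  have hYZ : ∀ b c, (μ ((fun ω => (Y ω, Z ω)) ⁻¹' {(b, c)})).toReal = ∑ a, p a b c := by
    intro b c
    have hun : (fun ω => (Y ω, Z ω)) ⁻¹' {(b, c)}
        = ⋃ a, (fun ω => (X ω, Y ω, Z ω)) ⁻¹' {(a, b, c)} := by
      ext ω; simp [Prod.ext_iff]
    have hdis : Pairwise (Function.onFun Disjoint fun a => (fun ω => (X ω, Y ω, Z ω)) ⁻¹' {(a, b, c)}) := by
      intro a a' haa
      rw [Function.onFun, Set.disjoint_left]
      intro ω hω hω'
      simp only [Set.mem_preimage, Set.mem_singleton_iff, Prod.ext_iff] at hω hω'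
      exact haa (hω.1.symm.trans hω'.1)
    rw [hun, measure_iUnion hdis (fun a => hmeas a b c), tsum_fintype]
    exact ENNReal.toReal_sum fun a _ => measure_ne_top μ _
  have hZm : ∀ c, (μ (Z ⁻¹' {c})).toReal = ∑ a, ∑ b, p a b c := by
    intro c
    have hun : Z ⁻¹' {c} = ⋃ (ab : S × T),
        (fun ω => (X ω, Y ω, Z ω)) ⁻¹' {(ab.1, ab.2, c)} := by
      ext ω; simp [Prod.ext_iff]
    have hdis : Pairwise (Function.onFun Disjoint fun ab : S × T =>
        (fun ω => (X ω, Y ω, Z ω)) ⁻¹' {(ab.1, ab.2, c)}) := by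
      intro ab ab' hne
      rw [Function.onFun, Set.disjoint_left]
      intro ω hω hω'
      simp only [Set.mem_preimage, Set.mem_singleton_iff, Prod.ext_iff] at hω hω'
      exact hne (Prod.ext (hω.1.symm.trans hω'.1) (hω.2.1.symm.trans hω'.2.1))
    rw [hun, measure_iUnion hdis (fun ab => hmeas ab.1 ab.2 c), tsum_fintype,
      ENNReal.toReal_sum fun ab _ => measure_ne_top μ _, Fintype.sum_prod_type]
  have hsum : ∑ a, ∑ b, ∑ c, p a b c = 1 := by
    have hun : (Set.univ : Set Ω) = ⋃ (x : S × T × R),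
        (fun ω => (X ω, Y ω, Z ω)) ⁻¹' {x} := by
      ext ω; simp
    have hdis : Pairwise (Function.onFun Disjoint fun x : S × T × R =>
        (fun ω => (X ω, Y ω, Z ω)) ⁻¹' {x}) := by
      intro x x' hne
      rw [Function.onFun, Set.disjoint_left]
      intro ω hω hω'
      simp only [Set.mem_preimage, Set.mem_singleton_iff] at hω hω'
      exact hne (hω.symm.trans hω')
    have htot : (μ (Set.univ : Set Ω)).toReal = ∑ x : S × T × R, p x.1 x.2.1 x.2.2 := by
      rw [hun, measure_iUnion hdis (fun x => hmeas x.1 x.2.1 x.2.2), tsum_fintype]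
      exact ENNReal.toReal_sum fun x _ => measure_ne_top μ _
    rw [measure_univ] at htot
    simp only [ENNReal.toReal_one] at htot
    calc ∑ a, ∑ b, ∑ c, p a b c = ∑ x : S × T × R, p x.1 x.2.1 x.2.2 := by
          rw [Fintype.sum_prod_type]
          refine Finset.sum_congr rfl fun a _ => ?_
          rw [Fintype.sum_prod_type]
      _ = 1 := htot.symm
  have eXZ : entropy μ (fun ω => (X ω, Z ω)) = ∑ a, ∑ c, negMulLog (∑ b, p a b c) := by
    unfold entropy
    rw [Fintype.sum_prod_type]
    exact Finset.sum_congr rfl fun a _ => Finset.sum_congr rfl fun c _ => by rw [hXZ]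
  have eYZ : entropy μ (fun ω => (Y ω, Z ω)) = ∑ b, ∑ c, negMulLog (∑ a, p a b c) := by
    unfold entropy
    rw [Fintype.sum_prod_type]
    exact Finset.sum_congr rfl fun b _ => Finset.sum_congr rfl fun c _ => by rw [hYZ]
  have eXYZ : entropy μ (fun ω => (X ω, Y ω, Z ω)) = ∑ a, ∑ b, ∑ c, negMulLog (p a b c) := by
    unfold entropy
    rw [Fintype.sum_prod_type]
    refine Finset.sum_congr rfl fun a _ => ?_
    rw [Fintype.sum_prod_type]
  have eZ : entropy μ Z = ∑ c, negMulLog (∑ a, ∑ b, p a b c) := by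
    unfold entropy
    exact Finset.sum_congr rfl fun c _ => by rw [hZm]
  have hfinal := submodular_aux' p hp hsum
  unfold condMutualInfo
  rw [eXZ, eYZ, eXYZ, eZ]
  linarith

private lemma mutualInfo_nonneg' (X : Ω → S) (Y : Ω → T)
    (hX : Measurable X) (hY : Measurable Y) :
    0 ≤ mutualInfo μ X Y := by
  have h := condMutualInfo_nonneg' μ X Y (fun _ : Ω => ()) hX hY measurable_const
  have u1 : entropy μ (fun _ : Ω => ()) = 0 := by
    unfold entropy
    simp [Set.preimage_const, Real.negMulLog]
  have u2 : entropy μ (fun ω => (X ω, ())) = entropy μ X :=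
    entropy_eq' μ ⟨fun s => (s, ()), fun q => q.1, fun _ => rfl, fun _ => rfl⟩ X _ (fun _ => rfl)
  have u3 : entropy μ (fun ω => (X ω, Y ω, ())) = entropy μ (fun ω => (X ω, Y ω)) :=
    entropy_eq' μ ⟨fun q => (q.1, q.2, ()), fun q => (q.1, q.2.1), fun _ => rfl, fun _ => rfl⟩
      _ _ (fun _ => rfl)
  have u2' : entropy μ (fun ω => (Y ω, ())) = entropy μ Y :=
    entropy_eq' μ ⟨fun s => (s, ()), fun q => q.1, fun _ => rfl, fun _ => rfl⟩ Y _ (fun _ => rfl)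
  unfold condMutualInfo at h
  unfold mutualInfo
  simp only [u1, u2, u2', u3] at h
  linarith

end Helpers

theorem stmt_3
    {Ω : Type*} [MeasurableSpace Ω] (μ : Measure Ω) [IsProbabilityMeasure μ]
    {SU SV SW₁ SW₂ SY₁ SY₂ : Type*}
    [Fintype SU] [MeasurableSpace SU] [MeasurableSingletonClass SU] [Fintype SV] [MeasurableSpace SV] [MeasurableSingletonClass SV] [Fintype SW₁] [MeasurableSpace SW₁] [MeasurableSingletonClass SW₁] [Fintype SW₂] [MeasurableSpace SW₂] [MeasurableSingletonClass SW₂] [Fintype SY₁] [MeasurableSpace SY₁] [MeasurableSingletonClass SY₁] [Fintype SY₂] [MeasurableSpace SY₂] [MeasurableSingletonClass SY₂]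
    (U : Ω → SU) (V : Ω → SV) (W₁ : Ω → SW₁) (W₂ : Ω → SW₂) (Y₁ : Ω → SY₁) (Y₂ : Ω → SY₂)
    (hU : Measurable U) (hV : Measurable V) (hW₁ : Measurable W₁) (hW₂ : Measurable W₂) (hY₁ : Measurable Y₁) (hY₂ : Measurable Y₂)
    (h0 : condMutualInfo μ W₂ Y₁ (fun ω => (U ω, W₁ ω)) = condMutualInfo μ W₁ Y₂ (fun ω => (U ω, W₂ ω)))
    (h1 : condMutualInfo μ V Y₂ (fun ω => (U ω, W₂ ω)) = condMutualInfo μ V Y₂ W₂)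
    : condMutualInfo μ U Y₁ W₁ + condMutualInfo μ V Y₂ W₂ ≤ mutualInfo μ (fun ω => (W₁ ω, W₂ ω)) Y₁ + condMutualInfo μ U Y₁ (fun ω => (W₁ ω, W₂ ω)) + condMutualInfo μ V Y₂ (fun ω => (U ω, W₁ ω, W₂ ω)) := by
  have nn1 : 0 ≤ mutualInfo μ W₁ Y₁ := mutualInfo_nonneg' μ W₁ Y₁ hW₁ hY₁
  have nn2 : 0 ≤ condMutualInfo μ W₁ Y₂ (fun ω => (U ω, V ω, W₂ ω)) :=
    condMutualInfo_nonneg' μ W₁ Y₂ (fun ω => (U ω, V ω, W₂ ω)) hW₁ hY₂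
      (hU.prodMk (hV.prodMk hW₂))
  -- permutation identities between joint entropies
  have g1 : entropy μ (fun ω => (Y₁ ω, W₁ ω)) = entropy μ (fun ω => (W₁ ω, Y₁ ω)) :=
    entropy_eq' μ ⟨fun x => (x.2, x.1), fun x => (x.2, x.1), fun _ => rfl, fun _ => rfl⟩
      _ _ (fun _ => rfl)
  have e1 : entropy μ (fun ω => (Y₁ ω, U ω, W₁ ω)) = entropy μ (fun ω => (U ω, Y₁ ω, W₁ ω)) :=
    entropy_eq' μ ⟨fun x => (x.2.1, x.1, x.2.2), fun x => (x.2.1, x.1, x.2.2),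
      fun _ => rfl, fun _ => rfl⟩ _ _ (fun _ => rfl)
  have e2 : entropy μ (fun ω => (W₂ ω, U ω, W₁ ω)) = entropy μ (fun ω => (U ω, W₁ ω, W₂ ω)) :=
    entropy_eq' μ ⟨fun x => (x.2.2, x.1, x.2.1), fun x => (x.2.1, x.2.2, x.1),
      fun _ => rfl, fun _ => rfl⟩ _ _ (fun _ => rfl)
  have e3 : entropy μ (fun ω => (W₂ ω, Y₁ ω, U ω, W₁ ω))
      = entropy μ (fun ω => (U ω, Y₁ ω, W₁ ω, W₂ ω)) :=
    entropy_eq' μ ⟨fun x => (x.2.2.2, x.2.1, x.1, x.2.2.1), fun x => (x.2.2.1, x.2.1, x.2.2.2, x.1),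
      fun _ => rfl, fun _ => rfl⟩ _ _ (fun _ => rfl)
  have f4 : entropy μ (fun ω => (Y₁ ω, W₁ ω, W₂ ω))
      = entropy μ (fun ω => ((W₁ ω, W₂ ω), Y₁ ω)) :=
    entropy_eq' μ ⟨fun x => (x.2, x.1.1, x.1.2), fun x => ((x.2.1, x.2.2), x.1),
      fun _ => rfl, fun _ => rfl⟩ _ _ (fun _ => rfl)
  have e8 : entropy μ (fun ω => (V ω, U ω, W₂ ω)) = entropy μ (fun ω => (U ω, V ω, W₂ ω)) :=
    entropy_eq' μ ⟨fun x => (x.2.1, x.1, x.2.2), fun x => (x.2.1, x.1, x.2.2),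
      fun _ => rfl, fun _ => rfl⟩ _ _ (fun _ => rfl)
  have e9 : entropy μ (fun ω => (W₁ ω, U ω, V ω, W₂ ω))
      = entropy μ (fun ω => (V ω, U ω, W₁ ω, W₂ ω)) :=
    entropy_eq' μ ⟨fun x => (x.2.2.1, x.2.1, x.1, x.2.2.2), fun x => (x.2.2.1, x.2.1, x.1, x.2.2.2),
      fun _ => rfl, fun _ => rfl⟩ _ _ (fun _ => rfl)
  have e10 : entropy μ (fun ω => (Y₂ ω, U ω, V ω, W₂ ω))
      = entropy μ (fun ω => (V ω, Y₂ ω, U ω, W₂ ω)) :=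
    entropy_eq' μ ⟨fun x => (x.2.1, x.2.2.1, x.1, x.2.2.2), fun x => (x.2.2.1, x.1, x.2.1, x.2.2.2),
      fun _ => rfl, fun _ => rfl⟩ _ _ (fun _ => rfl)
  have e11 : entropy μ (fun ω => (W₁ ω, Y₂ ω, U ω, V ω, W₂ ω))
      = entropy μ (fun ω => (V ω, Y₂ ω, U ω, W₁ ω, W₂ ω)) :=
    entropy_eq' μ ⟨fun x => (x.2.2.2.1, x.2.1, x.2.2.1, x.1, x.2.2.2.2),
      fun x => (x.2.2.2.1, x.2.1, x.2.2.1, x.1, x.2.2.2.2),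
      fun _ => rfl, fun _ => rfl⟩ _ _ (fun _ => rfl)
  have e12 : entropy μ (fun ω => (W₁ ω, U ω, W₂ ω)) = entropy μ (fun ω => (U ω, W₁ ω, W₂ ω)) :=
    entropy_eq' μ ⟨fun x => (x.2.1, x.1, x.2.2), fun x => (x.2.1, x.1, x.2.2),
      fun _ => rfl, fun _ => rfl⟩ _ _ (fun _ => rfl)
  have e14 : entropy μ (fun ω => (W₁ ω, Y₂ ω, U ω, W₂ ω))
      = entropy μ (fun ω => (Y₂ ω, U ω, W₁ ω, W₂ ω)) :=
    entropy_eq' μ ⟨fun x => (x.2.2.1, x.1, x.2.1, x.2.2.2), fun x => (x.2.1, x.2.2.1, x.1, x.2.2.2),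
      fun _ => rfl, fun _ => rfl⟩ _ _ (fun _ => rfl)
  simp only [condMutualInfo, mutualInfo] at h0 h1 nn1 nn2 ⊢
  linarith [h0, h1, nn1, nn2, g1, e1, e2, e3, f4, e8, e9, e10, e11, e12, e14]
end

section
/- (Csiszár sum identity) Let n be a positive integer and let Y₁ᵢ (i = 1,…,n) and Y₂ᵢ (i = 1,…,n) be random variables on a common probability space taking values in finite sets. Then ∑_{i=1}^{n} I(Y₂₍ᵢ₊₁₎ⁿ ; Y₁ᵢ | Y₁^{i−1}) = ∑_{i=1}^{n} I(Y₁^{i−1} ; Y₂ᵢ | Y₂₍ᵢ₊₁₎ⁿ), where Y₁^{i−1} denotes the tuple (Y₁₁,…,Y₁₍ᵢ₋₁₎) and Y₂₍ᵢ₊₁₎ⁿ denotes the tuple (Y₂₍ᵢ₊₁₎,…,Y₂ₙ); for i = 1 the conditioning on Y₁⁰ is vacuous (unconditional mutual information), and for i = n the random variable Y₂₍ₙ₊₁₎ⁿ is a constant (so the corresponding mutual information term is 0). -/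
open MeasureTheory Real

lemma entropy_eq_of_comp {Ω : Type*} [MeasurableSpace Ω] (μ : Measure Ω)
    {S T : Type*} [Fintype S] [Fintype T] (X : Ω → S) (Y : Ω → T)
    (f : S → T) (hf : Function.Injective f) (h : Y = fun ω => f (X ω)) :
    entropy μ Y = entropy μ X := h ▸ entropy_comp_inj μ X f hf

/-- The canonical entropy `H(Y₁ restricted to indices < a, Y₂ restricted to indices ≥ b)`. -/
noncomputable def csAux {Ω : Type*} [MeasurableSpace Ω] (μ : Measure Ω) {n : ℕ}
    {S₁ S₂ : Fin n → Type*} [∀ i, Fintype (S₁ i)] [∀ i, Fintype (S₂ i)]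
    (Y₁ : ∀ i, Ω → S₁ i) (Y₂ : ∀ i, Ω → S₂ i) (a b : ℕ) : ℝ :=
  entropy μ (fun ω =>
    ((fun j : {j : Fin n // (j : ℕ) < a} => Y₁ j ω),
     (fun j : {j : Fin n // b ≤ (j : ℕ)} => Y₂ j ω)))

/-- Csiszár sum identity. -/
theorem stmt_6
    {Ω : Type*} [MeasurableSpace Ω] (μ : Measure Ω) [IsProbabilityMeasure μ]
    (n : ℕ) (hn : 0 < n)
    {S₁ S₂ : Fin n → Type*}
    [∀ i, Fintype (S₁ i)] [∀ i, MeasurableSpace (S₁ i)] [∀ i, MeasurableSingletonClass (S₁ i)]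
    [∀ i, Fintype (S₂ i)] [∀ i, MeasurableSpace (S₂ i)] [∀ i, MeasurableSingletonClass (S₂ i)]
    (Y₁ : ∀ i, Ω → S₁ i) (Y₂ : ∀ i, Ω → S₂ i)
    (hY₁ : ∀ i, Measurable (Y₁ i)) (hY₂ : ∀ i, Measurable (Y₂ i)) :
    ∑ i : Fin n,
        condMutualInfo μ (fun ω => fun j : {j : Fin n // i < j} => Y₂ j ω)
          (Y₁ i) (fun ω => fun j : {j : Fin n // j < i} => Y₁ j ω)
      = ∑ i : Fin n,
        condMutualInfo μ (fun ω => fun j : {j : Fin n // j < i} => Y₁ j ω)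
          (Y₂ i) (fun ω => fun j : {j : Fin n // i < j} => Y₂ j ω) := by
  classical
  -- abbreviation
  let F : ℕ → ℕ → ℝ := csAux μ Y₁ Y₂
  -- the eight entropy identifications
  have hL1 : ∀ i : Fin n,
      entropy μ (fun ω => ((fun j : {j : Fin n // i < j} => Y₂ j ω),
        (fun j : {j : Fin n // j < i} => Y₁ j ω))) = F (i : ℕ) ((i : ℕ) + 1) := by
    intro i
    exact entropy_eq_of_comp μ
      (fun ω => ((fun j : {j : Fin n // (j : ℕ) < (i : ℕ)} => Y₁ j ω),
        (fun j : {j : Fin n // (i : ℕ) + 1 ≤ (j : ℕ)} => Y₂ j ω)))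
      _ Prod.swap Prod.swap_injective rfl
  have hL2 : ∀ i : Fin n,
      entropy μ (fun ω => (Y₁ i ω,
        (fun j : {j : Fin n // j < i} => Y₁ j ω))) = F ((i : ℕ) + 1) n := by
    intro i
    refine entropy_eq_of_comp μ _ _
      (fun p => (p.1 ⟨i, Nat.lt_succ_self _⟩,
        fun j : {j : Fin n // (j : ℕ) < (i : ℕ)} => p.1 ⟨j.1, Nat.lt_succ_of_lt j.2⟩))
      ?_ rfl
    intro p q h
    simp only [Prod.mk.injEq] at h
    refine Prod.ext ?_ ?_
    · funext j
      obtain ⟨j, hj⟩ := j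
      rcases Nat.lt_succ_iff_lt_or_eq.mp hj with hj' | hj'
      · exact congrFun h.2 ⟨j, hj'⟩
      · have hji : j = i := Fin.ext hj'
        subst hji
        exact h.1
    · funext j
      exact absurd j.1.isLt (Nat.not_lt.mpr j.2)
  have hL3 : ∀ i : Fin n,
      entropy μ (fun ω => ((fun j : {j : Fin n // i < j} => Y₂ j ω), Y₁ i ω,
        (fun j : {j : Fin n // j < i} => Y₁ j ω))) = F ((i : ℕ) + 1) ((i : ℕ) + 1) := by
    intro i
    refine entropy_eq_of_comp μ _ _
      (fun p => (p.2, p.1 ⟨i, Nat.lt_succ_self _⟩,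
        fun j : {j : Fin n // (j : ℕ) < (i : ℕ)} => p.1 ⟨j.1, Nat.lt_succ_of_lt j.2⟩))
      ?_ rfl
    intro p q h
    simp only [Prod.mk.injEq] at h
    refine Prod.ext ?_ h.1
    funext j
    obtain ⟨j, hj⟩ := j
    rcases Nat.lt_succ_iff_lt_or_eq.mp hj with hj' | hj'
    · exact congrFun h.2.2 ⟨j, hj'⟩
    · have hji : j = i := Fin.ext hj'
      subst hji
      exact h.2.1
  have hL4 : ∀ i : Fin n,
      entropy μ (fun ω => fun j : {j : Fin n // j < i} => Y₁ j ω) = F (i : ℕ) n := by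
    intro i
    refine entropy_eq_of_comp μ _ _ (fun p => p.1) ?_ rfl
    intro p q h
    refine Prod.ext h ?_
    funext j
    exact absurd j.1.isLt (Nat.not_lt.mpr j.2)
  have hR2 : ∀ i : Fin n,
      entropy μ (fun ω => (Y₂ i ω,
        (fun j : {j : Fin n // i < j} => Y₂ j ω))) = F 0 (i : ℕ) := by
    intro i
    refine entropy_eq_of_comp μ _ _
      (fun p => (p.2 ⟨i, Nat.le_refl _⟩,
        fun j : {j : Fin n // (i : ℕ) + 1 ≤ (j : ℕ)} => p.2 ⟨j.1, Nat.le_of_succ_le j.2⟩))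
      ?_ rfl
    intro p q h
    simp only [Prod.mk.injEq] at h
    refine Prod.ext ?_ ?_
    · funext j
      exact absurd j.2 (Nat.not_lt_zero _)
    · funext j
      obtain ⟨j, hj⟩ := j
      rcases Nat.eq_or_lt_of_le hj with hj' | hj'
      · have hji : j = i := Fin.ext hj'.symm
        subst hji
        exact h.1
      · exact congrFun h.2 ⟨j, hj'⟩
  have hR3 : ∀ i : Fin n,
      entropy μ (fun ω => ((fun j : {j : Fin n // j < i} => Y₁ j ω), Y₂ i ω,
        (fun j : {j : Fin n // i < j} => Y₂ j ω))) = F (i : ℕ) (i : ℕ) := by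
    intro i
    refine entropy_eq_of_comp μ _ _
      (fun p => (p.1, p.2 ⟨i, Nat.le_refl _⟩,
        fun j : {j : Fin n // (i : ℕ) + 1 ≤ (j : ℕ)} => p.2 ⟨j.1, Nat.le_of_succ_le j.2⟩))
      ?_ rfl
    intro p q h
    simp only [Prod.mk.injEq] at h
    refine Prod.ext h.1 ?_
    funext j
    obtain ⟨j, hj⟩ := j
    rcases Nat.eq_or_lt_of_le hj with hj' | hj'
    · have hji : j = i := Fin.ext hj'.symm
      subst hji
      exact h.2.1
    · exact congrFun h.2.2 ⟨j, hj'⟩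
  have hR4 : ∀ i : Fin n,
      entropy μ (fun ω => fun j : {j : Fin n // i < j} => Y₂ j ω) = F 0 ((i : ℕ) + 1) := by
    intro i
    refine entropy_eq_of_comp μ _ _ (fun p => p.2) ?_ rfl
    intro p q h
    refine Prod.ext ?_ h
    funext j
    exact absurd j.2 (Nat.not_lt_zero _)
  have hR1 : ∀ i : Fin n,
      entropy μ (fun ω => ((fun j : {j : Fin n // j < i} => Y₁ j ω),
        (fun j : {j : Fin n // i < j} => Y₂ j ω))) = F (i : ℕ) ((i : ℕ) + 1) := by
    intro i
    exact entropy_eq_of_comp μ _ _ id Function.injective_id rfl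
  -- rewrite both summands
  have hL : ∀ i : Fin n,
      condMutualInfo μ (fun ω => fun j : {j : Fin n // i < j} => Y₂ j ω)
          (Y₁ i) (fun ω => fun j : {j : Fin n // j < i} => Y₁ j ω)
        = F (i : ℕ) ((i : ℕ) + 1) + F ((i : ℕ) + 1) n
          - F ((i : ℕ) + 1) ((i : ℕ) + 1) - F (i : ℕ) n := by
    intro i
    unfold condMutualInfo
    rw [hL1 i, hL2 i, hL3 i, hL4 i]
  have hR : ∀ i : Fin n,
      condMutualInfo μ (fun ω => fun j : {j : Fin n // j < i} => Y₁ j ω)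
          (Y₂ i) (fun ω => fun j : {j : Fin n // i < j} => Y₂ j ω)
        = F (i : ℕ) ((i : ℕ) + 1) + F 0 (i : ℕ)
          - F (i : ℕ) (i : ℕ) - F 0 ((i : ℕ) + 1) := by
    intro i
    unfold condMutualInfo
    rw [hR1 i, hR2 i, hR3 i, hR4 i]
  -- telescoping
  have key : ∑ t ∈ Finset.range n, (F t (t + 1) + F (t + 1) n - F (t + 1) (t + 1) - F t n)
      = ∑ t ∈ Finset.range n, (F t (t + 1) + F 0 t - F t t - F 0 (t + 1)) := by
    have h1 := Finset.sum_range_sub (fun t => F t n) n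
    have h2 := Finset.sum_range_sub (fun t => F t t) n
    have h3 := Finset.sum_range_sub (fun t => F 0 t) n
    rw [← sub_eq_zero, ← Finset.sum_sub_distrib]
    have e : ∀ t ∈ Finset.range n,
        (F t (t + 1) + F (t + 1) n - F (t + 1) (t + 1) - F t n)
          - (F t (t + 1) + F 0 t - F t t - F 0 (t + 1))
        = ((F (t + 1) n - F t n) - (F (t + 1) (t + 1) - F t t)) + (F 0 (t + 1) - F 0 t) := by
      intro t _
      ring
    rw [Finset.sum_congr rfl e, Finset.sum_add_distrib, Finset.sum_sub_distrib, h1, h2, h3]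
    ring
  calc ∑ i : Fin n,
        condMutualInfo μ (fun ω => fun j : {j : Fin n // i < j} => Y₂ j ω)
          (Y₁ i) (fun ω => fun j : {j : Fin n // j < i} => Y₁ j ω)
      = ∑ t ∈ Finset.range n, (F t (t + 1) + F (t + 1) n - F (t + 1) (t + 1) - F t n) := by
        rw [← Fin.sum_univ_eq_sum_range (fun t => F t (t + 1) + F (t + 1) n
          - F (t + 1) (t + 1) - F t n) n]
        exact Finset.sum_congr rfl fun i _ => hL i
    _ = ∑ t ∈ Finset.range n, (F t (t + 1) + F 0 t - F t t - F 0 (t + 1)) := key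
    _ = ∑ i : Fin n,
        condMutualInfo μ (fun ω => fun j : {j : Fin n // j < i} => Y₁ j ω)
          (Y₂ i) (fun ω => fun j : {j : Fin n // i < j} => Y₂ j ω) := by
        rw [← Fin.sum_univ_eq_sum_range (fun t => F t (t + 1) + F 0 t - F t t - F 0 (t + 1)) n]
        exact Finset.sum_congr rfl fun i _ => (hR i).symm
end

section
/- Let n be a positive integer, let M₁, M₂ be independent random variables, and let Y₁,…,Yₙ be random variables, all on a common probability space and taking values in finite sets. Then ∑_{i=1}^{n} [ I(M₁; Yᵢ | (M₂, Y^{i−1})) − I(M₁; Yᵢ | Y^{i−1}) ] = I(M₁; M₂ | Yⁿ), where Y^{i−1} denotes the tuple (Y₁,…,Y₍ᵢ₋₁₎) and Yⁿ = (Y₁,…,Yₙ); for i = 1 the first term is I(M₁;Y₁|M₂) and the second is I(M₁;Y₁). -/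
open MeasureTheory Real

lemma entropy_unique {Ω : Type*} [MeasurableSpace Ω] (μ : Measure Ω) [IsProbabilityMeasure μ]
    {S : Type*} [Fintype S] [Unique S] (X : Ω → S) : entropy μ X = 0 := by
  unfold entropy
  rw [Fintype.sum_unique]
  have : X ⁻¹' {default} = Set.univ := by
    ext ω
    simp only [Set.mem_preimage, Set.mem_singleton_iff, Set.mem_univ, iff_true]
    exact Unique.eq_default _
  rw [this, measure_univ]
  simp

lemma restrict_eq {n : ℕ} {S : Fin n → Type*} (i : Fin n)
    {g g' : ∀ j : {j : Fin n // (j : ℕ) < (i : ℕ) + 1}, S j}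
    (h1 : g ⟨i, Nat.lt_succ_self _⟩ = g' ⟨i, Nat.lt_succ_self _⟩)
    (h2 : (fun j : {j : Fin n // (j : ℕ) < (i : ℕ)} => g ⟨j.1, Nat.lt_succ_of_lt j.2⟩)
        = (fun j : {j : Fin n // (j : ℕ) < (i : ℕ)} => g' ⟨j.1, Nat.lt_succ_of_lt j.2⟩)) :
    g = g' := by
  funext j
  rcases Nat.lt_succ_iff_lt_or_eq.mp j.2 with hj | hj
  · exact congrFun h2 ⟨j.1, hj⟩
  · have hji : j = ⟨i, Nat.lt_succ_self _⟩ := Subtype.ext (Fin.ext hj)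
    rw [hji]; exact h1

lemma restrictFull_eq {n : ℕ} {S : Fin n → Type*} {g g' : ∀ j : Fin n, S j}
    (h : (fun j : {j : Fin n // (j : ℕ) < n} => g j.1)
       = (fun j : {j : Fin n // (j : ℕ) < n} => g' j.1)) : g = g' := by
  funext j
  exact congrFun h ⟨j, j.isLt⟩

noncomputable def auxF {Ω : Type*} [MeasurableSpace Ω] (μ : Measure Ω) {n : ℕ}
    {SM₁ SM₂ : Type*} [Fintype SM₁] [Fintype SM₂]
    {S : Fin n → Type*} [∀ i, Fintype (S i)]
    (M₁ : Ω → SM₁) (M₂ : Ω → SM₂) (Y : ∀ i, Ω → S i) (k : ℕ) : ℝ :=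
  (entropy μ (fun ω => (M₁ ω, M₂ ω, fun j : {j : Fin n // (j : ℕ) < k} => Y j ω))
    - entropy μ (fun ω => (M₂ ω, fun j : {j : Fin n // (j : ℕ) < k} => Y j ω)))
  - (entropy μ (fun ω => (M₁ ω, fun j : {j : Fin n // (j : ℕ) < k} => Y j ω))
    - entropy μ (fun ω => fun j : {j : Fin n // (j : ℕ) < k} => Y j ω))

section steps
variable {Ω : Type*} [MeasurableSpace Ω] (μ : Measure Ω) [IsProbabilityMeasure μ]
    {n : ℕ} {SM₁ SM₂ : Type*} [Fintype SM₁] [Fintype SM₂]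
    {S : Fin n → Type*} [∀ i, Fintype (S i)]
    (M₁ : Ω → SM₁) (M₂ : Ω → SM₂) (Y : ∀ i, Ω → S i) (i : Fin n)

lemma stepA2 :
    entropy μ (fun ω => (Y i ω, M₂ ω, fun j : {j : Fin n // (j : ℕ) < (i : ℕ)} => Y j ω))
      = entropy μ (fun ω => (M₂ ω, fun j : {j : Fin n // (j : ℕ) < (i : ℕ) + 1} => Y j ω)) := by
  refine (entropy_comp_inj μ
    (fun ω => (M₂ ω, fun j : {j : Fin n // (j : ℕ) < (i : ℕ) + 1} => Y j ω))
    (fun p : SM₂ × (∀ j : {j : Fin n // (j : ℕ) < (i : ℕ) + 1}, S j) =>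
      ((p.2 ⟨i, Nat.lt_succ_self _⟩ : S i), p.1,
        fun j : {j : Fin n // (j : ℕ) < (i : ℕ)} => p.2 ⟨j.1, Nat.lt_succ_of_lt j.2⟩))
    ?_)
  intro p q h
  have h1 := congrArg Prod.fst h
  have h2 := congrArg (fun x => x.2.1) h
  have h3 := congrArg (fun x => x.2.2) h
  exact Prod.ext h2 (restrict_eq i h1 h3)

lemma stepA3 :
    entropy μ (fun ω => (M₁ ω, Y i ω, M₂ ω, fun j : {j : Fin n // (j : ℕ) < (i : ℕ)} => Y j ω))
      = entropy μ (fun ω => (M₁ ω, M₂ ω, fun j : {j : Fin n // (j : ℕ) < (i : ℕ) + 1} => Y j ω)) := by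
  refine (entropy_comp_inj μ
    (fun ω => (M₁ ω, M₂ ω, fun j : {j : Fin n // (j : ℕ) < (i : ℕ) + 1} => Y j ω))
    (fun p : SM₁ × SM₂ × (∀ j : {j : Fin n // (j : ℕ) < (i : ℕ) + 1}, S j) =>
      (p.1, (p.2.2 ⟨i, Nat.lt_succ_self _⟩ : S i), p.2.1,
        fun j : {j : Fin n // (j : ℕ) < (i : ℕ)} => p.2.2 ⟨j.1, Nat.lt_succ_of_lt j.2⟩))
    ?_)
  intro p q h
  have h0 := congrArg Prod.fst h
  have h1 := congrArg (fun x => x.2.1) h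
  have h2 := congrArg (fun x => x.2.2.1) h
  have h3 := congrArg (fun x => x.2.2.2) h
  exact Prod.ext h0 (Prod.ext h2 (restrict_eq i h1 h3))

lemma stepB2 :
    entropy μ (fun ω => (Y i ω, fun j : {j : Fin n // (j : ℕ) < (i : ℕ)} => Y j ω))
      = entropy μ (fun ω => fun j : {j : Fin n // (j : ℕ) < (i : ℕ) + 1} => Y j ω) := by
  refine (entropy_comp_inj μ
    (fun ω => fun j : {j : Fin n // (j : ℕ) < (i : ℕ) + 1} => Y j ω)
    (fun g : (∀ j : {j : Fin n // (j : ℕ) < (i : ℕ) + 1}, S j) =>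
      ((g ⟨i, Nat.lt_succ_self _⟩ : S i),
        fun j : {j : Fin n // (j : ℕ) < (i : ℕ)} => g ⟨j.1, Nat.lt_succ_of_lt j.2⟩))
    ?_)
  intro p q h
  have h1 := congrArg Prod.fst h
  have h3 := congrArg Prod.snd h
  exact restrict_eq i h1 h3

lemma stepB3 :
    entropy μ (fun ω => (M₁ ω, Y i ω, fun j : {j : Fin n // (j : ℕ) < (i : ℕ)} => Y j ω))
      = entropy μ (fun ω => (M₁ ω, fun j : {j : Fin n // (j : ℕ) < (i : ℕ) + 1} => Y j ω)) := by
  refine (entropy_comp_inj μ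
    (fun ω => (M₁ ω, fun j : {j : Fin n // (j : ℕ) < (i : ℕ) + 1} => Y j ω))
    (fun p : SM₁ × (∀ j : {j : Fin n // (j : ℕ) < (i : ℕ) + 1}, S j) =>
      (p.1, (p.2 ⟨i, Nat.lt_succ_self _⟩ : S i),
        fun j : {j : Fin n // (j : ℕ) < (i : ℕ)} => p.2 ⟨j.1, Nat.lt_succ_of_lt j.2⟩))
    ?_)
  intro p q h
  have h0 := congrArg Prod.fst h
  have h1 := congrArg (fun x => x.2.1) h
  have h3 := congrArg (fun x => x.2.2) h
  exact Prod.ext h0 (restrict_eq i h1 h3)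

end steps

set_option linter.unusedSectionVars false

section bdry
variable {Ω : Type*} [MeasurableSpace Ω] (μ : Measure Ω) [IsProbabilityMeasure μ]
    {n : ℕ} {SM₁ SM₂ : Type*} [Fintype SM₁] [Fintype SM₂]
    {S : Fin n → Type*} [∀ i, Fintype (S i)]
    (M₁ : Ω → SM₁) (M₂ : Ω → SM₂) (Y : ∀ i, Ω → S i)

instance : IsEmpty {j : Fin n // (j : ℕ) < 0} := ⟨fun j => Nat.not_lt_zero _ j.2⟩

lemma bz12 : entropy μ (fun ω => (M₁ ω, M₂ ω, fun j : {j : Fin n // (j : ℕ) < 0} => Y j ω))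
    = entropy μ (fun ω => (M₁ ω, M₂ ω)) := by
  have he : (fun ω => (M₁ ω, M₂ ω, fun j : {j : Fin n // (j : ℕ) < 0} => Y j ω))
      = (fun ω => (M₁ ω, M₂ ω, (default : ∀ j : {j : Fin n // (j : ℕ) < 0}, S j))) := by
    funext ω
    exact congrArg (Prod.mk (M₁ ω)) (congrArg (Prod.mk (M₂ ω)) (Subsingleton.elim _ _))
  rw [he]
  refine entropy_comp_inj μ (fun ω => (M₁ ω, M₂ ω)) (fun p => (p.1, p.2, default)) ?_
  intro p q h
  have h1 := congrArg Prod.fst h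
  have h2 := congrArg (fun x => x.2.1) h
  exact Prod.ext h1 h2

lemma bz2 : entropy μ (fun ω => (M₂ ω, fun j : {j : Fin n // (j : ℕ) < 0} => Y j ω))
    = entropy μ M₂ := by
  have he : (fun ω => (M₂ ω, fun j : {j : Fin n // (j : ℕ) < 0} => Y j ω))
      = (fun ω => (M₂ ω, (default : ∀ j : {j : Fin n // (j : ℕ) < 0}, S j))) := by
    funext ω
    exact congrArg (Prod.mk (M₂ ω)) (Subsingleton.elim _ _)
  rw [he]
  exact entropy_comp_inj μ M₂ (fun m => (m, default))
    (fun p q h => congrArg Prod.fst h)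

lemma bz1 : entropy μ (fun ω => (M₁ ω, fun j : {j : Fin n // (j : ℕ) < 0} => Y j ω))
    = entropy μ M₁ := by
  have he : (fun ω => (M₁ ω, fun j : {j : Fin n // (j : ℕ) < 0} => Y j ω))
      = (fun ω => (M₁ ω, (default : ∀ j : {j : Fin n // (j : ℕ) < 0}, S j))) := by
    funext ω
    exact congrArg (Prod.mk (M₁ ω)) (Subsingleton.elim _ _)
  rw [he]
  exact entropy_comp_inj μ M₁ (fun m => (m, default))
    (fun p q h => congrArg Prod.fst h)

lemma bz0 : entropy μ (fun ω => fun j : {j : Fin n // (j : ℕ) < 0} => Y j ω) = 0 :=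
  entropy_unique μ _

lemma bn12 : entropy μ (fun ω => (M₁ ω, M₂ ω, fun j : {j : Fin n // (j : ℕ) < n} => Y j ω))
    = entropy μ (fun ω => (M₁ ω, M₂ ω, fun j : Fin n => Y j ω)) :=
  entropy_comp_inj μ (fun ω => (M₁ ω, M₂ ω, fun j : Fin n => Y j ω))
    (fun p => (p.1, p.2.1, fun j : {j : Fin n // (j : ℕ) < n} => p.2.2 j.1))
    (by
      intro p q h
      have h1 := congrArg Prod.fst h
      have h2 := congrArg (fun x => x.2.1) h
      have h3 := congrArg (fun x => x.2.2) h
      exact Prod.ext h1 (Prod.ext h2 (restrictFull_eq h3)))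

lemma bn2 : entropy μ (fun ω => (M₂ ω, fun j : {j : Fin n // (j : ℕ) < n} => Y j ω))
    = entropy μ (fun ω => (M₂ ω, fun j : Fin n => Y j ω)) :=
  entropy_comp_inj μ (fun ω => (M₂ ω, fun j : Fin n => Y j ω))
    (fun p => (p.1, fun j : {j : Fin n // (j : ℕ) < n} => p.2 j.1))
    (by
      intro p q h
      have h1 := congrArg Prod.fst h
      have h2 := congrArg (fun x => x.2) h
      exact Prod.ext h1 (restrictFull_eq h2))

lemma bn1 : entropy μ (fun ω => (M₁ ω, fun j : {j : Fin n // (j : ℕ) < n} => Y j ω))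
    = entropy μ (fun ω => (M₁ ω, fun j : Fin n => Y j ω)) :=
  entropy_comp_inj μ (fun ω => (M₁ ω, fun j : Fin n => Y j ω))
    (fun p => (p.1, fun j : {j : Fin n // (j : ℕ) < n} => p.2 j.1))
    (by
      intro p q h
      have h1 := congrArg Prod.fst h
      have h2 := congrArg (fun x => x.2) h
      exact Prod.ext h1 (restrictFull_eq h2))

lemma bn0 : entropy μ (fun ω => fun j : {j : Fin n // (j : ℕ) < n} => Y j ω)
    = entropy μ (fun ω => fun j : Fin n => Y j ω) :=
  entropy_comp_inj μ (fun ω => fun j : Fin n => Y j ω)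
    (fun g => fun j : {j : Fin n // (j : ℕ) < n} => g j.1)
    (fun p q h => restrictFull_eq h)

end bdry


theorem stmt_7
    {Ω : Type*} [MeasurableSpace Ω] (μ : Measure Ω) [IsProbabilityMeasure μ]
    (n : ℕ) (hn : 0 < n)
    {SM₁ SM₂ : Type*}
    [Fintype SM₁] [MeasurableSpace SM₁] [MeasurableSingletonClass SM₁]
    [Fintype SM₂] [MeasurableSpace SM₂] [MeasurableSingletonClass SM₂]
    {S : Fin n → Type*}
    [∀ i, Fintype (S i)] [∀ i, MeasurableSpace (S i)] [∀ i, MeasurableSingletonClass (S i)]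
    (M₁ : Ω → SM₁) (M₂ : Ω → SM₂) (Y : ∀ i, Ω → S i)
    (hM₁ : Measurable M₁) (hM₂ : Measurable M₂) (hY : ∀ i, Measurable (Y i))
    (hindep : mutualInfo μ M₁ M₂ = 0) :
    ∑ i : Fin n,
        (condMutualInfo μ M₁ (Y i)
            (fun ω => (M₂ ω, fun j : {j : Fin n // j < i} => Y j ω))
          - condMutualInfo μ M₁ (Y i) (fun ω => fun j : {j : Fin n // j < i} => Y j ω))
      = condMutualInfo μ M₁ M₂ (fun ω => fun j : Fin n => Y j ω) := by
  classical
  have key : ∀ i : Fin n,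
      condMutualInfo μ M₁ (Y i)
          (fun ω => (M₂ ω, fun j : {j : Fin n // j < i} => Y j ω))
        - condMutualInfo μ M₁ (Y i) (fun ω => fun j : {j : Fin n // j < i} => Y j ω)
      = auxF μ M₁ M₂ Y (i : ℕ) - auxF μ M₁ M₂ Y ((i : ℕ) + 1) := by
    intro i
    show (entropy μ (fun ω => (M₁ ω, M₂ ω, fun j : {j : Fin n // (j : ℕ) < (i : ℕ)} => Y j ω))
        + entropy μ (fun ω => (Y i ω, M₂ ω, fun j : {j : Fin n // (j : ℕ) < (i : ℕ)} => Y j ω))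
        - entropy μ (fun ω => (M₁ ω, Y i ω, M₂ ω, fun j : {j : Fin n // (j : ℕ) < (i : ℕ)} => Y j ω))
        - entropy μ (fun ω => (M₂ ω, fun j : {j : Fin n // (j : ℕ) < (i : ℕ)} => Y j ω)))
      - (entropy μ (fun ω => (M₁ ω, fun j : {j : Fin n // (j : ℕ) < (i : ℕ)} => Y j ω))
        + entropy μ (fun ω => (Y i ω, fun j : {j : Fin n // (j : ℕ) < (i : ℕ)} => Y j ω))
        - entropy μ (fun ω => (M₁ ω, Y i ω, fun j : {j : Fin n // (j : ℕ) < (i : ℕ)} => Y j ω))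
        - entropy μ (fun ω => fun j : {j : Fin n // (j : ℕ) < (i : ℕ)} => Y j ω))
      = auxF μ M₁ M₂ Y (i : ℕ) - auxF μ M₁ M₂ Y ((i : ℕ) + 1)
    rw [stepA2 (μ := μ) (M₂ := M₂) (Y := Y) (i := i),
        stepA3 (μ := μ) (M₁ := M₁) (M₂ := M₂) (Y := Y) (i := i),
        stepB2 (μ := μ) (Y := Y) (i := i),
        stepB3 (μ := μ) (M₁ := M₁) (Y := Y) (i := i)]
    simp only [auxF]
    ring
  calc ∑ i : Fin n,
        (condMutualInfo μ M₁ (Y i)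
            (fun ω => (M₂ ω, fun j : {j : Fin n // j < i} => Y j ω))
          - condMutualInfo μ M₁ (Y i) (fun ω => fun j : {j : Fin n // j < i} => Y j ω))
      = ∑ i : Fin n, (auxF μ M₁ M₂ Y (i : ℕ) - auxF μ M₁ M₂ Y ((i : ℕ) + 1)) :=
        Finset.sum_congr rfl (fun i _ => key i)
    _ = ∑ k ∈ Finset.range n, (auxF μ M₁ M₂ Y k - auxF μ M₁ M₂ Y (k + 1)) :=
        Fin.sum_univ_eq_sum_range (fun k => auxF μ M₁ M₂ Y k - auxF μ M₁ M₂ Y (k + 1)) n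
    _ = auxF μ M₁ M₂ Y 0 - auxF μ M₁ M₂ Y n := Finset.sum_range_sub' _ n
    _ = condMutualInfo μ M₁ M₂ (fun ω => fun j : Fin n => Y j ω) := by
        have hz : auxF μ M₁ M₂ Y 0
            = (entropy μ (fun ω => (M₁ ω, M₂ ω)) - entropy μ M₂)
              - (entropy μ M₁ - 0) := by
          simp only [auxF]
          rw [bz12 (μ := μ) (M₁ := M₁) (M₂ := M₂) (Y := Y),
              bz2 (μ := μ) (M₂ := M₂) (Y := Y),
              bz1 (μ := μ) (M₁ := M₁) (Y := Y),
              bz0 (μ := μ) (Y := Y)]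
        have hnn : auxF μ M₁ M₂ Y n
            = (entropy μ (fun ω => (M₁ ω, M₂ ω, fun j : Fin n => Y j ω))
                - entropy μ (fun ω => (M₂ ω, fun j : Fin n => Y j ω)))
              - (entropy μ (fun ω => (M₁ ω, fun j : Fin n => Y j ω))
                - entropy μ (fun ω => fun j : Fin n => Y j ω)) := by
          simp only [auxF]
          rw [bn12 (μ := μ) (M₁ := M₁) (M₂ := M₂) (Y := Y),
              bn2 (μ := μ) (M₂ := M₂) (Y := Y),
              bn1 (μ := μ) (M₁ := M₁) (Y := Y),
              bn0 (μ := μ) (Y := Y)]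
        rw [hz, hnn]
        simp only [mutualInfo] at hindep
        simp only [condMutualInfo]
        linarith
end

section
/- Let T, U, W₁, W₂, Y₁, Y₂ be random variables on a common probability space taking values in finite sets. If I(W₂;Y₁|(T,W₁)) = I(W₁;Y₂|(T,W₂)) and I(U;Y₁|(T,W₁)) = I(U;Y₁|W₁), then I(T;Y₂|W₂) + I(U;Y₁|W₁) ≤ I(U;Y₁|(T,W₁,W₂)) + I((T,W₁);Y₂|W₂). -/
open MeasureTheory Real

lemma entropy_equiv {Ω : Type*} [MeasurableSpace Ω] (μ : Measure Ω)
    {S S' : Type*} [Fintype S] [Fintype S'] (e : S ≃ S') (X : Ω → S) :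
    entropy μ (fun ω => e (X ω)) = entropy μ X := by
  unfold entropy
  rw [← Equiv.sum_comp e (fun x' => Real.negMulLog (μ ((fun ω => e (X ω)) ⁻¹' {x'})).toReal)]
  refine Finset.sum_congr rfl fun x _ => ?_
  have h : ((fun ω => e (X ω)) ⁻¹' {e x}) = X ⁻¹' {x} := by
    ext ω; simp
  rw [h]

lemma entropy_equiv' {Ω : Type*} [MeasurableSpace Ω] (μ : Measure Ω)
    {S S' : Type*} [Fintype S] [Fintype S'] (e : S ≃ S') (X : Ω → S) (X' : Ω → S')
    (h : ∀ ω, X' ω = e (X ω)) : entropy μ X' = entropy μ X := by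
  have : X' = fun ω => e (X ω) := funext h
  rw [this]
  exact entropy_equiv μ e X

lemma measure_sum_fiber {Ω : Type*} [MeasurableSpace Ω] (μ : Measure Ω)
    {B : Type*} [Fintype B] [MeasurableSpace B] [MeasurableSingletonClass B]
    {g : Ω → B} (hg : Measurable g) (s : Set Ω) (hs : MeasurableSet s) :
    μ s = ∑ y, μ (s ∩ g ⁻¹' {y}) := by
  have hu : s = ⋃ y ∈ (Finset.univ : Finset B), s ∩ g ⁻¹' {y} := by
    ext ω; simp
  have hd : Set.PairwiseDisjoint ((Finset.univ : Finset B) : Set B) (fun y => s ∩ g ⁻¹' {y}) := by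
    intro y _ y' _ hne
    refine Set.disjoint_left.2 fun {ω} h1 h2 => hne ?_
    simp only [Set.mem_inter_iff, Set.mem_preimage, Set.mem_singleton_iff] at h1 h2
    rw [← h1.2, ← h2.2]
  conv_lhs => rw [hu]
  exact measure_biUnion_finset hd fun y _ => hs.inter (hg (measurableSet_singleton y))


lemma ptwise {p a b c : ℝ} (hp0 : 0 ≤ p) (ha : p ≤ a) (hb : p ≤ b) (hc : p ≤ c) :
    p - a * b / c ≤ p * log p + p * log c - p * log a - p * log b := by
  rcases eq_or_lt_of_le hp0 with h | h
  · have ha0 : 0 ≤ a := le_trans hp0 ha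
    have hb0 : 0 ≤ b := le_trans hp0 hb
    have hc0 : 0 ≤ c := le_trans hp0 hc
    rw [← h]
    simp only [zero_mul, zero_sub, sub_zero, add_zero, sub_self]
    have : 0 ≤ a * b / c := by positivity
    linarith
  · have ha' : 0 < a := lt_of_lt_of_le h ha
    have hb' : 0 < b := lt_of_lt_of_le h hb
    have hc' : 0 < c := lt_of_lt_of_le h hc
    have key : log (a * b / (p * c)) ≤ a * b / (p * c) - 1 :=
      log_le_sub_one_of_pos (by positivity)
    rw [Real.log_div (by positivity) (by positivity), Real.log_mul (ne_of_gt ha') (ne_of_gt hb'),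
      Real.log_mul (ne_of_gt h) (ne_of_gt hc')] at key
    have h2 := mul_le_mul_of_nonneg_left key hp0
    have h3 : p * (a * b / (p * c)) = a * b / c := by
      field_simp
    nlinarith [h2, h3]

lemma key_ineq {A B C : Type*} [Fintype A] [Fintype B] [Fintype C]
    (p : A → B → C → ℝ) (hp : ∀ x y z, 0 ≤ p x y z) :
    (∑ x, ∑ y, ∑ z, negMulLog (p x y z)) + ∑ z, negMulLog (∑ x, ∑ y, p x y z)
      ≤ (∑ x, ∑ z, negMulLog (∑ y, p x y z)) + ∑ y, ∑ z, negMulLog (∑ x, p x y z) := by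
  obtain ⟨a, haD⟩ : ∃ a : A → C → ℝ, ∀ x z, a x z = ∑ y, p x y z := ⟨_, fun _ _ => rfl⟩
  obtain ⟨b, hbD⟩ : ∃ b : B → C → ℝ, ∀ y z, b y z = ∑ x, p x y z := ⟨_, fun _ _ => rfl⟩
  obtain ⟨c, hcD⟩ : ∃ c : C → ℝ, ∀ z, c z = ∑ x, ∑ y, p x y z := ⟨_, fun _ => rfl⟩
  simp only [← hcD]
  simp only [← haD]
  simp only [← hbD]
  -- basic facts
  have hpa : ∀ x y z, p x y z ≤ a x z := fun x y z => by
    rw [haD]; exact Finset.single_le_sum (fun i _ => hp x i z) (Finset.mem_univ y)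
  have hpb : ∀ x y z, p x y z ≤ b y z := fun x y z => by
    rw [hbD]; exact Finset.single_le_sum (fun i _ => hp i y z) (Finset.mem_univ x)
  have ha0 : ∀ x z, 0 ≤ a x z := fun x z => by
    rw [haD]; exact Finset.sum_nonneg fun i _ => hp x i z
  have hb0 : ∀ y z, 0 ≤ b y z := fun y z => by
    rw [hbD]; exact Finset.sum_nonneg fun i _ => hp i y z
  have hac : ∀ z, (∑ x, a x z) = c z := fun z => by
    rw [hcD]; exact Finset.sum_congr rfl fun x _ => haD x z
  have hbc : ∀ z, (∑ y, b y z) = c z := fun z => by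
    rw [hcD, Finset.sum_comm]
    exact Finset.sum_congr rfl fun y _ => hbD y z
  have hpc : ∀ x y z, p x y z ≤ c z := fun x y z => by
    rw [← hac]
    exact le_trans (hpa x y z)
      (Finset.single_le_sum (fun i _ => ha0 i z) (Finset.mem_univ x))
  -- rewrite entropy sums as triple sums
  have comm3 : ∀ (f : A → B → C → ℝ),
      (∑ x, ∑ y, ∑ z, f x y z) = ∑ z, ∑ x, ∑ y, f x y z := by
    intro f
    calc (∑ x, ∑ y, ∑ z, f x y z) = ∑ x, ∑ z, ∑ y, f x y z :=
          Finset.sum_congr rfl fun x _ => Finset.sum_comm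
      _ = ∑ z, ∑ x, ∑ y, f x y z := Finset.sum_comm
  have hA : (∑ x, ∑ z, negMulLog (a x z)) = ∑ x, ∑ y, ∑ z, -(p x y z * log (a x z)) := by
    refine Finset.sum_congr rfl fun x _ => ?_
    rw [Finset.sum_comm]
    refine Finset.sum_congr rfl fun z _ => ?_
    rw [negMulLog, neg_mul, haD, Finset.sum_mul, ← Finset.sum_neg_distrib]
  have hB : (∑ y, ∑ z, negMulLog (b y z)) = ∑ x, ∑ y, ∑ z, -(p x y z * log (b y z)) := by
    calc (∑ y, ∑ z, negMulLog (b y z)) = ∑ y, ∑ z, ∑ x, -(p x y z * log (b y z)) := by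
          refine Finset.sum_congr rfl fun y _ => Finset.sum_congr rfl fun z _ => ?_
          rw [negMulLog, neg_mul, hbD, Finset.sum_mul, ← Finset.sum_neg_distrib]
      _ = ∑ y, ∑ x, ∑ z, -(p x y z * log (b y z)) :=
          Finset.sum_congr rfl fun y _ => Finset.sum_comm
      _ = ∑ x, ∑ y, ∑ z, -(p x y z * log (b y z)) := Finset.sum_comm
  have hC : (∑ z, negMulLog (c z)) = ∑ x, ∑ y, ∑ z, -(p x y z * log (c z)) := by
    rw [comm3]
    refine Finset.sum_congr rfl fun z _ => ?_
    rw [negMulLog, neg_mul, hcD, Finset.sum_mul, ← Finset.sum_neg_distrib]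
    refine Finset.sum_congr rfl fun x _ => ?_
    rw [Finset.sum_mul, ← Finset.sum_neg_distrib]
  have hP : (∑ x, ∑ y, ∑ z, negMulLog (p x y z))
      = ∑ x, ∑ y, ∑ z, -(p x y z * log (p x y z)) := by
    refine Finset.sum_congr rfl fun x _ => Finset.sum_congr rfl fun y _ =>
      Finset.sum_congr rfl fun z _ => ?_
    rw [negMulLog, neg_mul]
  rw [hA, hB, hC, hP]
  have big : (∑ x, ∑ y, ∑ z, -(p x y z * log (a x z)))
      + (∑ x, ∑ y, ∑ z, -(p x y z * log (b y z)))
      - ((∑ x, ∑ y, ∑ z, -(p x y z * log (p x y z)))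
      + (∑ x, ∑ y, ∑ z, -(p x y z * log (c z))))
      = ∑ x, ∑ y, ∑ z, (p x y z * log (p x y z) + p x y z * log (c z)
          - p x y z * log (a x z) - p x y z * log (b y z)) := by
    simp only [← Finset.sum_add_distrib, ← Finset.sum_sub_distrib]
    refine Finset.sum_congr rfl fun x _ => Finset.sum_congr rfl fun y _ =>
      Finset.sum_congr rfl fun z _ => by ring
  have z0 : (∑ x, ∑ y, ∑ z, (p x y z - a x z * b y z / c z)) = 0 := by
    rw [comm3]
    refine Finset.sum_eq_zero fun z _ => ?_
    have h1 : (∑ x, ∑ y, (p x y z - a x z * b y z / c z))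
        = c z - c z * (c z / c z) := by
      rw [Finset.sum_congr rfl fun x _ => Finset.sum_sub_distrib _ _,
        Finset.sum_sub_distrib, ← hcD]
      congr 1
      calc (∑ x, ∑ y, a x z * b y z / c z)
          = ∑ x, a x z * (c z / c z) := by
            refine Finset.sum_congr rfl fun x _ => ?_
            rw [← hbc z]
            simp only [mul_div_assoc]
            rw [← Finset.mul_sum, ← Finset.sum_div]
        _ = c z * (c z / c z) := by
            rw [← Finset.sum_mul, hac]
    rw [h1]
    rcases eq_or_ne (c z) 0 with h | h
    · simp [h]
    · rw [div_self h, mul_one, sub_self]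
  have pos : (∑ x, ∑ y, ∑ z, (p x y z - a x z * b y z / c z))
      ≤ ∑ x, ∑ y, ∑ z, (p x y z * log (p x y z) + p x y z * log (c z)
          - p x y z * log (a x z) - p x y z * log (b y z)) := by
    refine Finset.sum_le_sum fun x _ => Finset.sum_le_sum fun y _ =>
      Finset.sum_le_sum fun z _ => ?_
    exact ptwise (hp x y z) (hpa x y z) (hpb x y z) (hpc x y z)
  linarith [big, pos, z0]

lemma cmi_nonneg {Ω : Type*} [MeasurableSpace Ω] (μ : Measure Ω) [IsProbabilityMeasure μ]
    {A B C : Type*} [Fintype A] [MeasurableSpace A] [MeasurableSingletonClass A]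
    [Fintype B] [MeasurableSpace B] [MeasurableSingletonClass B]
    [Fintype C] [MeasurableSpace C] [MeasurableSingletonClass C]
    (X : Ω → A) (Y : Ω → B) (Z : Ω → C)
    (hX : Measurable X) (hY : Measurable Y) (hZ : Measurable Z) :
    0 ≤ condMutualInfo μ X Y Z := by
  classical
  set S : A → B → C → Set Ω := fun x y z => X ⁻¹' {x} ∩ Y ⁻¹' {y} ∩ Z ⁻¹' {z} with hS_def
  have hSm : ∀ x y z, MeasurableSet (S x y z) := fun x y z =>
    ((hX (measurableSet_singleton x)).inter (hY (measurableSet_singleton y))).inter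
      (hZ (measurableSet_singleton z))
  set p : A → B → C → ℝ := fun x y z => (μ (S x y z)).toReal with hp_def
  have hp : ∀ x y z, 0 ≤ p x y z := fun _ _ _ => ENNReal.toReal_nonneg
  have hfin : ∀ (s : Set Ω), μ s ≠ ⊤ := fun s => measure_ne_top μ s
  have hHxyz : entropy μ (fun ω => (X ω, Y ω, Z ω)) = ∑ x, ∑ y, ∑ z, negMulLog (p x y z) := by
    unfold entropy
    rw [Fintype.sum_prod_type]
    refine Finset.sum_congr rfl fun x _ => ?_
    rw [Fintype.sum_prod_type]
    refine Finset.sum_congr rfl fun y _ => Finset.sum_congr rfl fun z _ => ?_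
    have : (fun ω => (X ω, Y ω, Z ω)) ⁻¹' {(x, y, z)} = S x y z := by
      ext ω
      simp only [hS_def, Set.mem_preimage, Set.mem_singleton_iff, Prod.mk.injEq,
        Set.mem_inter_iff]
      tauto
    rw [this]
  have hHxz : entropy μ (fun ω => (X ω, Z ω)) = ∑ x, ∑ z, negMulLog (∑ y, p x y z) := by
    unfold entropy
    rw [Fintype.sum_prod_type]
    refine Finset.sum_congr rfl fun x _ => Finset.sum_congr rfl fun z _ => ?_
    have hmeas : MeasurableSet ((fun ω => (X ω, Z ω)) ⁻¹' {(x, z)}) :=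
      (hX.prodMk hZ) (measurableSet_singleton (x, z))
    rw [measure_sum_fiber μ hY _ hmeas]
    have hset : ∀ y, (fun ω => (X ω, Z ω)) ⁻¹' {(x, z)} ∩ Y ⁻¹' {y} = S x y z := by
      intro y
      ext ω
      simp only [hS_def, Set.mem_inter_iff, Set.mem_preimage, Set.mem_singleton_iff,
        Prod.mk.injEq]
      tauto
    rw [Finset.sum_congr rfl fun y _ => by rw [hset y]]
    rw [ENNReal.toReal_sum fun y _ => hfin _]
  have hHyz : entropy μ (fun ω => (Y ω, Z ω)) = ∑ y, ∑ z, negMulLog (∑ x, p x y z) := by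
    unfold entropy
    rw [Fintype.sum_prod_type]
    refine Finset.sum_congr rfl fun y _ => Finset.sum_congr rfl fun z _ => ?_
    have hmeas : MeasurableSet ((fun ω => (Y ω, Z ω)) ⁻¹' {(y, z)}) :=
      (hY.prodMk hZ) (measurableSet_singleton (y, z))
    rw [measure_sum_fiber μ hX _ hmeas]
    have hset : ∀ x, (fun ω => (Y ω, Z ω)) ⁻¹' {(y, z)} ∩ X ⁻¹' {x} = S x y z := by
      intro x
      ext ω
      simp only [hS_def, Set.mem_inter_iff, Set.mem_preimage, Set.mem_singleton_iff,
        Prod.mk.injEq]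
      tauto
    rw [Finset.sum_congr rfl fun x _ => by rw [hset x]]
    rw [ENNReal.toReal_sum fun x _ => hfin _]
  have hHz : entropy μ Z = ∑ z, negMulLog (∑ x, ∑ y, p x y z) := by
    unfold entropy
    refine Finset.sum_congr rfl fun z _ => ?_
    have hmeasz : MeasurableSet (Z ⁻¹' {z}) := hZ (measurableSet_singleton z)
    rw [measure_sum_fiber μ hX _ hmeasz]
    have step : ∀ x, μ (Z ⁻¹' {z} ∩ X ⁻¹' {x}) = ∑ y, μ (S x y z) := by
      intro x
      rw [measure_sum_fiber μ hY _ (hmeasz.inter (hX (measurableSet_singleton x)))]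
      refine Finset.sum_congr rfl fun y _ => ?_
      congr 1
      ext ω
      simp only [hS_def, Set.mem_inter_iff, Set.mem_preimage, Set.mem_singleton_iff]
      tauto
    rw [Finset.sum_congr rfl fun x _ => step x]
    rw [ENNReal.toReal_sum fun x _ => (by
      rw [← step x]; exact hfin _ : ∑ y, μ (S x y z) ≠ ⊤)]
    congr 1
    refine Finset.sum_congr rfl fun x _ => ?_
    rw [ENNReal.toReal_sum fun y _ => hfin _]
  unfold condMutualInfo
  rw [hHxyz, hHxz, hHyz, hHz]
  have := key_ineq p hp
  linarith [key_ineq p hp]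

set_option maxHeartbeats 2000000 in
theorem stmt_9
    {Ω : Type*} [MeasurableSpace Ω] (μ : Measure Ω) [IsProbabilityMeasure μ]
    {ST SU SW₁ SW₂ SY₁ SY₂ : Type*}
    [Fintype ST] [MeasurableSpace ST] [MeasurableSingletonClass ST] [Fintype SU] [MeasurableSpace SU] [MeasurableSingletonClass SU] [Fintype SW₁] [MeasurableSpace SW₁] [MeasurableSingletonClass SW₁] [Fintype SW₂] [MeasurableSpace SW₂] [MeasurableSingletonClass SW₂] [Fintype SY₁] [MeasurableSpace SY₁] [MeasurableSingletonClass SY₁] [Fintype SY₂] [MeasurableSpace SY₂] [MeasurableSingletonClass SY₂]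
    (T : Ω → ST) (U : Ω → SU) (W₁ : Ω → SW₁) (W₂ : Ω → SW₂) (Y₁ : Ω → SY₁) (Y₂ : Ω → SY₂)
    (hT : Measurable T) (hU : Measurable U) (hW₁ : Measurable W₁) (hW₂ : Measurable W₂) (hY₁ : Measurable Y₁) (hY₂ : Measurable Y₂)
    (h0 : condMutualInfo μ W₂ Y₁ (fun ω => (T ω, W₁ ω)) = condMutualInfo μ W₁ Y₂ (fun ω => (T ω, W₂ ω)))
    (h1 : condMutualInfo μ U Y₁ (fun ω => (T ω, W₁ ω)) = condMutualInfo μ U Y₁ W₁)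
    : condMutualInfo μ T Y₂ W₂ + condMutualInfo μ U Y₁ W₁ ≤ condMutualInfo μ U Y₁ (fun ω => (T ω, W₁ ω, W₂ ω)) + condMutualInfo μ (fun ω => (T ω, W₁ ω)) Y₂ W₂ := by
  have hnn : 0 ≤ condMutualInfo μ W₂ Y₁ (fun ω => (U ω, T ω, W₁ ω)) :=
    cmi_nonneg μ W₂ Y₁ _ hW₂ hY₁ (hU.prodMk (hT.prodMk hW₁))
  have q2 : entropy μ (fun ω => (T ω, Y₂ ω, W₂ ω)) = entropy μ (fun ω => (Y₂ ω, (T ω, W₂ ω))) :=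
    entropy_equiv' μ ⟨fun p => (p.2.1, (p.1, p.2.2)), fun p => (p.2.1, (p.1, p.2.2)),
      fun _ => rfl, fun _ => rfl⟩ (fun ω => (Y₂ ω, (T ω, W₂ ω))) _ (fun _ => rfl)
  have q3 : entropy μ (fun ω => (U ω, (T ω, W₁ ω, W₂ ω))) = entropy μ (fun ω => (W₂ ω, (U ω, T ω, W₁ ω))) :=
    entropy_equiv' μ ⟨fun p => (p.2.1, (p.2.2.1, (p.2.2.2, p.1))),
      fun q => (q.2.2.2, (q.1, (q.2.1, q.2.2.1))), fun _ => rfl, fun _ => rfl⟩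
      (fun ω => (W₂ ω, (U ω, T ω, W₁ ω))) _ (fun _ => rfl)
  have q4 : entropy μ (fun ω => (Y₁ ω, (T ω, W₁ ω, W₂ ω))) = entropy μ (fun ω => (W₂ ω, Y₁ ω, (T ω, W₁ ω))) :=
    entropy_equiv' μ ⟨fun p => (p.2.1, (p.2.2.1, (p.2.2.2, p.1))),
      fun q => (q.2.2.2, (q.1, (q.2.1, q.2.2.1))), fun _ => rfl, fun _ => rfl⟩
      (fun ω => (W₂ ω, Y₁ ω, (T ω, W₁ ω))) _ (fun _ => rfl)
  have q5 : entropy μ (fun ω => (U ω, Y₁ ω, (T ω, W₁ ω, W₂ ω))) = entropy μ (fun ω => (W₂ ω, Y₁ ω, (U ω, T ω, W₁ ω))) :=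
    entropy_equiv' μ ⟨fun p => (p.2.2.1, (p.2.1, (p.2.2.2.1, (p.2.2.2.2, p.1)))),
      fun q => (q.2.2.2.2, (q.2.1, (q.1, (q.2.2.1, q.2.2.2.1)))), fun _ => rfl, fun _ => rfl⟩
      (fun ω => (W₂ ω, Y₁ ω, (U ω, T ω, W₁ ω))) _ (fun _ => rfl)
  have q6 : entropy μ (fun ω => (T ω, W₁ ω, W₂ ω)) = entropy μ (fun ω => ((T ω, W₁ ω), W₂ ω)) :=
    entropy_equiv' μ ⟨fun p => (p.1.1, (p.1.2, p.2)), fun q => ((q.1, q.2.1), q.2.2),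
      fun _ => rfl, fun _ => rfl⟩ (fun ω => ((T ω, W₁ ω), W₂ ω)) _ (fun _ => rfl)
  have q7 : entropy μ (fun ω => (W₂ ω, (T ω, W₁ ω))) = entropy μ (fun ω => ((T ω, W₁ ω), W₂ ω)) :=
    entropy_equiv' μ ⟨fun p => (p.2, p.1), fun q => (q.2, q.1),
      fun _ => rfl, fun _ => rfl⟩ (fun ω => ((T ω, W₁ ω), W₂ ω)) _ (fun _ => rfl)
  have q8 : entropy μ (fun ω => (W₁ ω, (T ω, W₂ ω))) = entropy μ (fun ω => ((T ω, W₁ ω), W₂ ω)) :=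
    entropy_equiv' μ ⟨fun p => (p.1.2, (p.1.1, p.2)), fun q => ((q.2.1, q.1), q.2.2),
      fun _ => rfl, fun _ => rfl⟩ (fun ω => ((T ω, W₁ ω), W₂ ω)) _ (fun _ => rfl)
  have q9 : entropy μ (fun ω => ((T ω, W₁ ω), Y₂ ω, W₂ ω)) = entropy μ (fun ω => (W₁ ω, Y₂ ω, (T ω, W₂ ω))) :=
    entropy_equiv' μ ⟨fun p => ((p.2.2.1, p.1), (p.2.1, p.2.2.2)),
      fun q => (q.1.2, (q.2.1, (q.1.1, q.2.2))), fun _ => rfl, fun _ => rfl⟩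
      (fun ω => (W₁ ω, Y₂ ω, (T ω, W₂ ω))) _ (fun _ => rfl)
  have q10 : entropy μ (fun ω => (Y₁ ω, (U ω, T ω, W₁ ω))) = entropy μ (fun ω => (U ω, Y₁ ω, (T ω, W₁ ω))) :=
    entropy_equiv' μ ⟨fun p => (p.2.1, (p.1, p.2.2)), fun q => (q.2.1, (q.1, q.2.2)),
      fun _ => rfl, fun _ => rfl⟩ (fun ω => (U ω, Y₁ ω, (T ω, W₁ ω))) _ (fun _ => rfl)
  simp only [condMutualInfo] at h0 h1 hnn ⊢
  linarith [h0, h1, hnn, q2, q3, q4, q5, q6, q7, q8, q9, q10]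
end

section
/- Let T, V, W₁, W₂, Y₁, Y₂ be random variables on a common probability space taking values in finite sets. If I(W₁;Y₂|(T,W₂)) = I(W₂;Y₁|(T,W₁)) and I(V;Y₂|(T,W₂)) = I(V;Y₂|W₂), then I(T;Y₁|W₁) + I(V;Y₂|W₂) ≤ I(V;Y₂|(T,W₁,W₂)) + I((T,W₂);Y₁|W₁). -/
open MeasureTheory Real

section IT


variable {Ω : Type*} [MeasurableSpace Ω] (μ : Measure Ω)

lemma entropy_comp {S T : Type*} [Fintype S] [Fintype T]
    (X : Ω → S) (f : S → T) (hf : Function.Injective f) :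
    entropy μ (fun ω => f (X ω)) = entropy μ X := by
  classical
  unfold entropy
  have h1 : ∀ x : S, (fun ω => f (X ω)) ⁻¹' {f x} = X ⁻¹' {x} := by
    intro x; ext ω; simp [hf.eq_iff]
  have h2 : ∑ x : S, negMulLog (μ (X ⁻¹' {x})).toReal
      = ∑ t ∈ Finset.univ.image f, negMulLog (μ ((fun ω => f (X ω)) ⁻¹' {t})).toReal := by
    rw [Finset.sum_image (fun a _ b _ h => hf h)]
    exact Finset.sum_congr rfl fun x _ => by rw [h1]
  rw [h2]
  symm
  apply Finset.sum_subset (Finset.subset_univ _)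
  intro t _ ht
  have : (fun ω => f (X ω)) ⁻¹' {t} = ∅ := by
    ext ω; simp only [Set.mem_preimage, Set.mem_singleton_iff, Set.mem_empty_iff_false, iff_false]
    intro h; exact ht (Finset.mem_image.mpr ⟨X ω, Finset.mem_univ _, h⟩)
  simp [this]

lemma entropy_comp₂ {α β γ : Type*} [Fintype α] [Fintype β] [Fintype γ]
    (W : Ω → α) (f : α → β) (g : α → γ)
    (hf : Function.Injective f) (hg : Function.Injective g) :
    entropy μ (fun ω => f (W ω)) = entropy μ (fun ω => g (W ω)) := by
  rw [entropy_comp μ W f hf, entropy_comp μ W g hg]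

lemma meas_comp [IsFiniteMeasure μ] {α β : Type*} [Fintype α] [MeasurableSpace α] [MeasurableSingletonClass α]
    [DecidableEq β] {W : Ω → α} (hW : Measurable W) {U : Ω → β} {g : α → β}
    (hU : ∀ ω, U ω = g (W ω)) (b : β) :
    (μ (U ⁻¹' {b})).toReal = ∑ a : α, if g a = b then (μ (W ⁻¹' {a})).toReal else 0 := by
  have hUg : U ⁻¹' {b} = ⋃ a ∈ Finset.univ.filter (fun a => g a = b), W ⁻¹' {a} := by
    ext ω
    simp only [Set.mem_preimage, Set.mem_singleton_iff, Set.mem_iUnion, Finset.mem_filter,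
      Finset.mem_univ, true_and, hU ω]
    constructor
    · intro h; exact ⟨W ω, h, rfl⟩
    · rintro ⟨a, h1, h2⟩; rw [h2]; exact h1
  rw [hUg, measure_biUnion_finset ?hd (fun a _ => hW (measurableSet_singleton a)),
    ENNReal.toReal_sum (fun a _ => measure_ne_top μ _), Finset.sum_filter]
  case hd =>
    intro a _ a' _ hne
    simp only [Function.onFun]
    apply Set.disjoint_left.mpr
    intro ω h1 h2
    simp only [Set.mem_preimage, Set.mem_singleton_iff] at h1 h2
    exact hne (by rw [← h1, ← h2])



lemma sum_iteA {SX SY SZ : Type*} [Fintype SX] [Fintype SY] [Fintype SZ]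
    [DecidableEq SX] [DecidableEq SZ] (Q : SX × SY × SZ → ℝ) (x : SX) (z : SZ) :
    ∑ a : SX × SY × SZ, (if (a.1, a.2.2) = (x, z) then Q a else 0)
      = ∑ y : SY, Q (x, y, z) := by
  rw [Fintype.sum_prod_type]
  rw [Finset.sum_eq_single x]
  · rw [Fintype.sum_prod_type, Finset.sum_comm, Finset.sum_eq_single z]
    · exact Finset.sum_congr rfl fun y _ => by simp
    · intro z' _ hne; exact Finset.sum_eq_zero fun y _ => by simp [hne]
    · simp
  · intro x' _ hne; exact Finset.sum_eq_zero fun p _ => by simp [hne]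
  · simp

lemma sum_iteB {SX SY SZ : Type*} [Fintype SX] [Fintype SY] [Fintype SZ]
    [DecidableEq SY] [DecidableEq SZ] (Q : SX × SY × SZ → ℝ) (y : SY) (z : SZ) :
    ∑ a : SX × SY × SZ, (if a.2 = (y, z) then Q a else 0)
      = ∑ x : SX, Q (x, y, z) := by
  rw [Fintype.sum_prod_type]
  refine Finset.sum_congr rfl fun x _ => ?_
  rw [Finset.sum_eq_single (y, z)]
  · simp
  · intro p _ hne; simp [hne]
  · simp

lemma sum_iteC {SX SY SZ : Type*} [Fintype SX] [Fintype SY] [Fintype SZ]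
    [DecidableEq SZ] (Q : SX × SY × SZ → ℝ) (z : SZ) :
    ∑ a : SX × SY × SZ, (if a.2.2 = z then Q a else 0)
      = ∑ x : SX, ∑ y : SY, Q (x, y, z) := by
  rw [Fintype.sum_prod_type]
  refine Finset.sum_congr rfl fun x _ => ?_
  rw [Fintype.sum_prod_type]
  refine Finset.sum_congr rfl fun y _ => ?_
  rw [Finset.sum_eq_single z]
  · simp
  · intro z' _ hne; simp [hne]
  · simp


lemma sum3_comm {SX SY SZ : Type*} [Fintype SX] [Fintype SY] [Fintype SZ]
    (f : SX → SY → SZ → ℝ) :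
    ∑ x, ∑ y, ∑ z, f x y z = ∑ z, ∑ x, ∑ y, f x y z := by
  calc ∑ x, ∑ y, ∑ z, f x y z = ∑ x, ∑ z, ∑ y, f x y z :=
        Finset.sum_congr rfl fun x _ => Finset.sum_comm
    _ = ∑ z, ∑ x, ∑ y, f x y z := Finset.sum_comm

lemma sum3_comm' {SX SY SZ : Type*} [Fintype SX] [Fintype SY] [Fintype SZ]
    (f : SX → SY → SZ → ℝ) :
    ∑ x, ∑ y, ∑ z, f x y z = ∑ y, ∑ z, ∑ x, f x y z := by
  calc ∑ x, ∑ y, ∑ z, f x y z = ∑ y, ∑ x, ∑ z, f x y z := Finset.sum_comm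
    _ = ∑ y, ∑ z, ∑ x, f x y z := Finset.sum_congr rfl fun y _ => Finset.sum_comm

lemma core {SX SY SZ : Type*} [Fintype SX] [Fintype SY] [Fintype SZ]
    (P : SX → SY → SZ → ℝ) (hP : ∀ x y z, 0 ≤ P x y z)
    (hsum : ∑ z : SZ, ∑ x : SX, ∑ y : SY, P x y z = 1) :
    0 ≤ ∑ x : SX, ∑ z : SZ, negMulLog (∑ y : SY, P x y z)
        + ∑ y : SY, ∑ z : SZ, negMulLog (∑ x : SX, P x y z)
        - ∑ x : SX, ∑ y : SY, ∑ z : SZ, negMulLog (P x y z)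
        - ∑ z : SZ, negMulLog (∑ x : SX, ∑ y : SY, P x y z) := by
  set A : SX → SZ → ℝ := fun x z => ∑ y, P x y z with hA
  set B : SY → SZ → ℝ := fun y z => ∑ x, P x y z with hB
  set R : SZ → ℝ := fun z => ∑ x, ∑ y, P x y z with hR
  have hA0 : ∀ x z, 0 ≤ A x z := fun x z => Finset.sum_nonneg fun y _ => hP x y z
  have hB0 : ∀ y z, 0 ≤ B y z := fun y z => Finset.sum_nonneg fun x _ => hP x y z
  have hR0 : ∀ z, 0 ≤ R z := fun z => Finset.sum_nonneg fun x _ => hA0 x z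
  -- rewrite the three marginal entropy sums as triple sums
  have E1 : ∑ x, ∑ z, negMulLog (A x z)
      = ∑ x, ∑ y, ∑ z, -(P x y z * Real.log (A x z)) := by
    refine Finset.sum_congr rfl fun x _ => ?_
    rw [Finset.sum_comm]
    refine Finset.sum_congr rfl fun z _ => ?_
    rw [negMulLog, hA, neg_mul, Finset.sum_mul, ← Finset.sum_neg_distrib]
  have E2 : ∑ y, ∑ z, negMulLog (B y z)
      = ∑ x, ∑ y, ∑ z, -(P x y z * Real.log (B y z)) := by
    have e : ∀ y z, negMulLog (B y z) = ∑ x, -(P x y z * Real.log (B y z)) := by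
      intro y z
      rw [negMulLog, hB, neg_mul, Finset.sum_mul, ← Finset.sum_neg_distrib]
    calc ∑ y, ∑ z, negMulLog (B y z)
        = ∑ y, ∑ z, ∑ x, -(P x y z * Real.log (B y z)) :=
          Finset.sum_congr rfl fun y _ => Finset.sum_congr rfl fun z _ => e y z
      _ = ∑ x, ∑ y, ∑ z, -(P x y z * Real.log (B y z)) := (sum3_comm' _).symm
  have E3 : ∑ z, negMulLog (R z)
      = ∑ x, ∑ y, ∑ z, -(P x y z * Real.log (R z)) := by
    have e : ∀ z, negMulLog (R z) = ∑ x, ∑ y, -(P x y z * Real.log (R z)) := by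
      intro z
      rw [negMulLog, hR, neg_mul, Finset.sum_mul, ← Finset.sum_neg_distrib]
      refine Finset.sum_congr rfl fun x _ => ?_
      rw [Finset.sum_mul, ← Finset.sum_neg_distrib]
    calc ∑ z, negMulLog (R z)
        = ∑ z, ∑ x, ∑ y, -(P x y z * Real.log (R z)) :=
          Finset.sum_congr rfl fun z _ => e z
      _ = ∑ x, ∑ y, ∑ z, -(P x y z * Real.log (R z)) := (sum3_comm _).symm
  rw [E1, E2, E3]
  have hsplit : ∑ x, ∑ y, ∑ z, -(P x y z * Real.log (A x z))
        + ∑ x, ∑ y, ∑ z, -(P x y z * Real.log (B y z))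
        - ∑ x, ∑ y, ∑ z, negMulLog (P x y z)
        - ∑ x, ∑ y, ∑ z, -(P x y z * Real.log (R z))
      = - ∑ x, ∑ y, ∑ z, (P x y z * Real.log (A x z) + P x y z * Real.log (B y z)
          - P x y z * Real.log (P x y z) - P x y z * Real.log (R z)) := by
    simp only [← Finset.sum_sub_distrib, ← Finset.sum_add_distrib, ← Finset.sum_neg_distrib]
    refine Finset.sum_congr rfl fun x _ => Finset.sum_congr rfl fun y _ =>
      Finset.sum_congr rfl fun z _ => ?_
    rw [negMulLog]; ring
  rw [hsplit, neg_nonneg]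
  have hle : ∀ x y z, P x y z * Real.log (A x z) + P x y z * Real.log (B y z)
      - P x y z * Real.log (P x y z) - P x y z * Real.log (R z)
      ≤ A x z * B y z / R z - P x y z := by
    intro x y z
    rcases eq_or_lt_of_le (hP x y z) with h | h
    · rw [← h]
      simp only [zero_mul, sub_zero, add_zero, zero_add, sub_zero]
      have : 0 ≤ A x z * B y z / R z :=
        div_nonneg (mul_nonneg (hA0 x z) (hB0 y z)) (hR0 z)
      linarith [hA0 x z, hB0 y z, hR0 z]
    · have hAp : 0 < A x z := lt_of_lt_of_le h (by
        rw [hA]; exact Finset.single_le_sum (fun y' _ => hP x y' z) (Finset.mem_univ y))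
      have hBp : 0 < B y z := lt_of_lt_of_le h (by
        rw [hB]; exact Finset.single_le_sum (fun x' _ => hP x' y z) (Finset.mem_univ x))
      have hRp : 0 < R z := lt_of_lt_of_le hAp (by
        rw [hR]
        exact Finset.single_le_sum (fun x' _ => Finset.sum_nonneg fun y' _ => hP x' y' z)
          (Finset.mem_univ x))
      have key : P x y z * Real.log (A x z) + P x y z * Real.log (B y z)
          - P x y z * Real.log (P x y z) - P x y z * Real.log (R z)
          = P x y z * Real.log (A x z * B y z / (P x y z * R z)) := by
        rw [Real.log_div (by positivity) (by positivity),
          Real.log_mul (ne_of_gt hAp) (ne_of_gt hBp),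
          Real.log_mul (ne_of_gt h) (ne_of_gt hRp)]
        ring
      rw [key]
      have hlog := Real.log_le_sub_one_of_pos
        (show 0 < A x z * B y z / (P x y z * R z) by positivity)
      have := mul_le_mul_of_nonneg_left hlog (le_of_lt h)
      calc P x y z * Real.log (A x z * B y z / (P x y z * R z))
          ≤ P x y z * (A x z * B y z / (P x y z * R z) - 1) := this
        _ = A x z * B y z / R z - P x y z := by
            field_simp
  have step1 : ∑ x, ∑ y, ∑ z, (P x y z * Real.log (A x z) + P x y z * Real.log (B y z)
        - P x y z * Real.log (P x y z) - P x y z * Real.log (R z))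
      ≤ ∑ x, ∑ y, ∑ z, (A x z * B y z / R z - P x y z) :=
    Finset.sum_le_sum fun x _ => Finset.sum_le_sum fun y _ =>
      Finset.sum_le_sum fun z _ => hle x y z
  have hsumP : ∑ x, ∑ y, ∑ z, P x y z = 1 := by rw [sum3_comm]; exact hsum
  have hABR : ∑ x, ∑ y, ∑ z, A x z * B y z / R z ≤ 1 := by
    rw [sum3_comm]
    have inner : ∀ z, ∑ x, ∑ y, A x z * B y z / R z = R z * (R z / R z) := by
      intro z
      have h1 : ∀ x, ∑ y, A x z * B y z / R z = A x z * ((∑ y, B y z) / R z) := by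
        intro x
        refine (Finset.sum_congr rfl fun y _ => mul_div_assoc _ _ _).trans ?_
        rw [← Finset.mul_sum, ← Finset.sum_div]
      rw [Finset.sum_congr rfl fun x _ => h1 x, ← Finset.sum_mul]
      have h2 : ∑ x, A x z = R z := by simp only [hA, hR]
      have h3 : ∑ y, B y z = R z := by
        simp only [hB, hR]; exact Finset.sum_comm
      rw [h2, h3]
    rw [Finset.sum_congr rfl fun z _ => inner z]
    have h4 : ∀ z, R z * (R z / R z) ≤ R z := by
      intro z
      rcases eq_or_lt_of_le (hR0 z) with h | h
      · rw [← h]; simp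
      · rw [div_self (ne_of_gt h), mul_one]
    calc ∑ z, R z * (R z / R z) ≤ ∑ z, R z := Finset.sum_le_sum fun z _ => h4 z
      _ = 1 := hsum
  have step2 : ∑ x, ∑ y, ∑ z, (A x z * B y z / R z - P x y z)
      = ∑ x, ∑ y, ∑ z, A x z * B y z / R z - ∑ x, ∑ y, ∑ z, P x y z := by
    simp only [Finset.sum_sub_distrib]
  linarith
lemma condMutualInfo_nonneg {Ω : Type*} [MeasurableSpace Ω] (μ : Measure Ω)
    [IsProbabilityMeasure μ] {SX SY SZ : Type*}
    [Fintype SX] [MeasurableSpace SX] [MeasurableSingletonClass SX]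
    [Fintype SY] [MeasurableSpace SY] [MeasurableSingletonClass SY]
    [Fintype SZ] [MeasurableSpace SZ] [MeasurableSingletonClass SZ]
    (X : Ω → SX) (Y : Ω → SY) (Z : Ω → SZ)
    (hX : Measurable X) (hY : Measurable Y) (hZ : Measurable Z) :
    0 ≤ condMutualInfo μ X Y Z := by
  classical
  have hW : Measurable (fun ω => (X ω, Y ω, Z ω)) := hX.prodMk (hY.prodMk hZ)
  set P : SX → SY → SZ → ℝ :=
    fun x y z => (μ ((fun ω => (X ω, Y ω, Z ω)) ⁻¹' {(x, y, z)})).toReal with hPdef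
  have hP0 : ∀ x y z, 0 ≤ P x y z := fun _ _ _ => ENNReal.toReal_nonneg
  have HXZ : entropy μ (fun ω => (X ω, Z ω)) = ∑ x, ∑ z, negMulLog (∑ y, P x y z) := by
    unfold entropy
    rw [Fintype.sum_prod_type]
    refine Finset.sum_congr rfl fun x _ => Finset.sum_congr rfl fun z _ => ?_
    congr 1
    exact (meas_comp μ hW (U := fun ω => (X ω, Z ω))
      (g := fun a : SX × SY × SZ => (a.1, a.2.2)) (fun ω => rfl) (x, z)).trans
      (sum_iteA _ x z)
  have HYZ : entropy μ (fun ω => (Y ω, Z ω)) = ∑ y, ∑ z, negMulLog (∑ x, P x y z) := by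
    unfold entropy
    rw [Fintype.sum_prod_type]
    refine Finset.sum_congr rfl fun y _ => Finset.sum_congr rfl fun z _ => ?_
    congr 1
    exact (meas_comp μ hW (U := fun ω => (Y ω, Z ω))
      (g := fun a : SX × SY × SZ => a.2) (fun ω => rfl) (y, z)).trans
      (sum_iteB _ y z)
  have HZ : entropy μ Z = ∑ z, negMulLog (∑ x, ∑ y, P x y z) := by
    unfold entropy
    refine Finset.sum_congr rfl fun z _ => ?_
    congr 1
    exact (meas_comp μ hW (U := Z)
      (g := fun a : SX × SY × SZ => a.2.2) (fun ω => rfl) z).trans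
      (sum_iteC _ z)
  have HXYZ : entropy μ (fun ω => (X ω, Y ω, Z ω))
      = ∑ x, ∑ y, ∑ z, negMulLog (P x y z) := by
    unfold entropy
    rw [Fintype.sum_prod_type]
    refine Finset.sum_congr rfl fun x _ => ?_
    rw [Fintype.sum_prod_type]
  have hsum : ∑ z, ∑ x, ∑ y, P x y z = 1 := by
    have h := meas_comp μ hW (U := fun _ : Ω => ()) (g := fun _ => ()) (fun ω => rfl) ()
    rw [show ((fun _ : Ω => ()) ⁻¹' {()}) = Set.univ from by ext ω; simp,
      measure_univ] at h
    simp only [eq_self_iff_true, if_true, ite_true, ENNReal.toReal_one] at h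
    rw [← sum3_comm]
    have h2 : ∑ x, ∑ y, ∑ z, P x y z
        = ∑ a : SX × SY × SZ, (μ ((fun ω => (X ω, Y ω, Z ω)) ⁻¹' {a})).toReal := by
      simp only [Fintype.sum_prod_type]
      rfl
    rw [h2]
    exact h.symm
  unfold condMutualInfo
  rw [HXZ, HYZ, HZ, HXYZ]
  exact core P hP0 hsum

section CR2
variable {Ω : Type*} [MeasurableSpace Ω] (μ : Measure Ω)
  {SA SB SY SZ SR : Type*} [Fintype SA] [Fintype SB] [Fintype SY] [Fintype SZ] [Fintype SR]

variable {Ω : Type*} [MeasurableSpace Ω] (μ : Measure Ω)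
  {SA SB SY SZ SR : Type*} [Fintype SA] [Fintype SB] [Fintype SY] [Fintype SZ] [Fintype SR]

lemma condMutualInfo_chain (A : Ω → SA) (B : Ω → SB) (Y : Ω → SY) (Z : Ω → SZ) :
    condMutualInfo μ (fun ω => (A ω, B ω)) Y Z
      = condMutualInfo μ A Y Z + condMutualInfo μ B Y (fun ω => (A ω, Z ω)) := by
  unfold condMutualInfo
  have e1 : entropy μ (fun ω => ((A ω, B ω), Z ω)) = entropy μ (fun ω => (B ω, (A ω, Z ω))) :=
    entropy_comp₂ μ (fun ω => (A ω, B ω, Z ω))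
      (fun p => ((p.1, p.2.1), p.2.2)) (fun p => (p.2.1, (p.1, p.2.2)))
      (by intro ⟨a,b,c⟩ ⟨a',b',c'⟩ h; simp_all) (by intro ⟨a,b,c⟩ ⟨a',b',c'⟩ h; simp_all)
  have e2 : entropy μ (fun ω => ((A ω, B ω), Y ω, Z ω))
      = entropy μ (fun ω => (B ω, Y ω, (A ω, Z ω))) :=
    entropy_comp₂ μ (fun ω => (A ω, B ω, Y ω, Z ω))
      (fun p => ((p.1, p.2.1), p.2.2)) (fun p => (p.2.1, p.2.2.1, (p.1, p.2.2.2)))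
      (by intro ⟨a,b,c⟩ ⟨a',b',c'⟩ h; simp_all) (by intro ⟨a,b,c,d⟩ ⟨a',b',c',d'⟩ h; simp_all)
  have e3 : entropy μ (fun ω => (A ω, Y ω, Z ω)) = entropy μ (fun ω => (Y ω, (A ω, Z ω))) :=
    entropy_comp₂ μ (fun ω => (A ω, Y ω, Z ω))
      (fun p => p) (fun p => (p.2.1, (p.1, p.2.2)))
      (fun _ _ h => h) (by intro ⟨a,b,c⟩ ⟨a',b',c'⟩ h; simp_all)
  beta_reduce
  rw [e1, e2, e3]
  ring

lemma condMutualInfo_comp_x (X : Ω → SA) (Y : Ω → SY) (Z : Ω → SZ)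
    (f : SA → SB) (hf : Function.Injective f) :
    condMutualInfo μ (fun ω => f (X ω)) Y Z = condMutualInfo μ X Y Z := by
  unfold condMutualInfo
  have e1 : entropy μ (fun ω => (f (X ω), Z ω)) = entropy μ (fun ω => (X ω, Z ω)) :=
    entropy_comp μ (fun ω => (X ω, Z ω)) (fun p => (f p.1, p.2))
      (by intro ⟨a,b⟩ ⟨a',b'⟩ h; simp_all; exact hf h.1)
  have e2 : entropy μ (fun ω => (f (X ω), Y ω, Z ω)) = entropy μ (fun ω => (X ω, Y ω, Z ω)) :=
    entropy_comp μ (fun ω => (X ω, Y ω, Z ω)) (fun p => (f p.1, p.2))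
      (by intro ⟨a,b⟩ ⟨a',b'⟩ h; simp_all; exact hf h.1)
  beta_reduce
  rw [e1, e2]

lemma condMutualInfo_comp_z (X : Ω → SA) (Y : Ω → SY) (Z : Ω → SZ)
    (f : SZ → SR) (hf : Function.Injective f) :
    condMutualInfo μ X Y (fun ω => f (Z ω)) = condMutualInfo μ X Y Z := by
  unfold condMutualInfo
  have e1 : entropy μ (fun ω => (X ω, f (Z ω))) = entropy μ (fun ω => (X ω, Z ω)) :=
    entropy_comp μ (fun ω => (X ω, Z ω)) (fun p => (p.1, f p.2))
      (by intro ⟨a,b⟩ ⟨a',b'⟩ h; simp_all; exact hf h.2)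
  have e2 : entropy μ (fun ω => (Y ω, f (Z ω))) = entropy μ (fun ω => (Y ω, Z ω)) :=
    entropy_comp μ (fun ω => (Y ω, Z ω)) (fun p => (p.1, f p.2))
      (by intro ⟨a,b⟩ ⟨a',b'⟩ h; simp_all; exact hf h.2)
  have e3 : entropy μ (fun ω => (X ω, Y ω, f (Z ω))) = entropy μ (fun ω => (X ω, Y ω, Z ω)) :=
    entropy_comp μ (fun ω => (X ω, Y ω, Z ω)) (fun p => (p.1, p.2.1, f p.2.2))
      (by intro ⟨a,b,c⟩ ⟨a',b',c'⟩ h; simp_all; exact hf h.2.2)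
  have e4 : entropy μ (fun ω => f (Z ω)) = entropy μ Z := entropy_comp μ Z f hf
  beta_reduce
  rw [e1, e2, e3, e4]

end CR2
end IT

theorem stmt_10
    {Ω : Type*} [MeasurableSpace Ω] (μ : Measure Ω) [IsProbabilityMeasure μ]
    {ST SV SW₁ SW₂ SY₁ SY₂ : Type*}
    [Fintype ST] [MeasurableSpace ST] [MeasurableSingletonClass ST] [Fintype SV] [MeasurableSpace SV] [MeasurableSingletonClass SV] [Fintype SW₁] [MeasurableSpace SW₁] [MeasurableSingletonClass SW₁] [Fintype SW₂] [MeasurableSpace SW₂] [MeasurableSingletonClass SW₂] [Fintype SY₁] [MeasurableSpace SY₁] [MeasurableSingletonClass SY₁] [Fintype SY₂] [MeasurableSpace SY₂] [MeasurableSingletonClass SY₂]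
    (T : Ω → ST) (V : Ω → SV) (W₁ : Ω → SW₁) (W₂ : Ω → SW₂) (Y₁ : Ω → SY₁) (Y₂ : Ω → SY₂)
    (hT : Measurable T) (hV : Measurable V) (hW₁ : Measurable W₁) (hW₂ : Measurable W₂) (hY₁ : Measurable Y₁) (hY₂ : Measurable Y₂)
    (h0 : condMutualInfo μ W₁ Y₂ (fun ω => (T ω, W₂ ω)) = condMutualInfo μ W₂ Y₁ (fun ω => (T ω, W₁ ω)))
    (h1 : condMutualInfo μ V Y₂ (fun ω => (T ω, W₂ ω)) = condMutualInfo μ V Y₂ W₂)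
    : condMutualInfo μ T Y₁ W₁ + condMutualInfo μ V Y₂ W₂ ≤ condMutualInfo μ V Y₂ (fun ω => (T ω, W₁ ω, W₂ ω)) + condMutualInfo μ (fun ω => (T ω, W₂ ω)) Y₁ W₁ := by
  have c1 := condMutualInfo_chain μ T W₂ Y₁ W₁
  have c2 := condMutualInfo_chain μ W₁ V Y₂ (fun ω => (T ω, W₂ ω))
  have c3 := condMutualInfo_chain μ V W₁ Y₂ (fun ω => (T ω, W₂ ω))
  have cswap : condMutualInfo μ (fun ω => (W₁ ω, V ω)) Y₂ (fun ω => (T ω, W₂ ω))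
      = condMutualInfo μ (fun ω => (V ω, W₁ ω)) Y₂ (fun ω => (T ω, W₂ ω)) := by
    have := condMutualInfo_comp_x μ (fun ω => (V ω, W₁ ω)) Y₂ (fun ω => (T ω, W₂ ω))
      (fun p : SV × SW₁ => (p.2, p.1)) (by intro ⟨a,b⟩ ⟨a',b'⟩ h; simp_all)
    exact this.symm ▸ rfl
  have c4 : condMutualInfo μ V Y₂ (fun ω => (W₁ ω, (T ω, W₂ ω)))
      = condMutualInfo μ V Y₂ (fun ω => (T ω, W₁ ω, W₂ ω)) := by
    have := condMutualInfo_comp_z μ V Y₂ (fun ω => (T ω, W₁ ω, W₂ ω))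
      (fun p : ST × SW₁ × SW₂ => (p.2.1, (p.1, p.2.2)))
      (by intro ⟨a,b,c⟩ ⟨a',b',c'⟩ h; simp_all)
    exact this
  have n1 : 0 ≤ condMutualInfo μ W₁ Y₂ (fun ω => (V ω, (T ω, W₂ ω))) :=
    condMutualInfo_nonneg μ W₁ Y₂ (fun ω => (V ω, (T ω, W₂ ω))) hW₁ hY₂
      (hV.prodMk (hT.prodMk hW₂))
  linarith [c1, c2, c3, cswap, c4, n1, h0, h1]
end
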